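/- arXiv:1307.5284 — 7 statements merged into one kernel-verified Lean document; each statement's English description precedes it below -/
import Mathlib

section
/- For u in the Hardy space L^2_+(S^1), the shifted Hankel operator K_u = T_z^* H_u satisfies K_u^2 = H_u^2 - (·|u)u, i.e., for every h in L^2_+, K_u^2(h) = H_u^2(h) - (h|u)u. -/
open scoped BigOperators

/-- Fourier-coefficient model of the Hankel operator `H_u(h) = Π(u ⬝ conj h)`
on the Hardy space `L²₊(S¹)`: `(H_u h)^(n) = ∑_{k ≥ 0} û(n+k) ⬝ conj(ĥ(k))`. -/
noncomputable def hankel (u h : ℕ → ℂ) : ℕ → ℂ :=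
  fun n => ∑' k : ℕ, u (n + k) * (starRingEnd ℂ) (h k)

/-- The shifted Hankel operator `K_u = T_z^* H_u`:
`(K_u h)^(n) = ∑_{k ≥ 0} û(n+k+1) ⬝ conj(ĥ(k))`. -/
noncomputable def shiftedHankel (u h : ℕ → ℂ) : ℕ → ℂ :=
  fun n => ∑' k : ℕ, u (n + k + 1) * (starRingEnd ℂ) (h k)

open Filter Topology

private lemma u_sq_summable {u : ℕ → ℂ}
    (hu : Summable fun n : ℕ => ((n : ℝ) + 1) * ‖u n‖ ^ 2) :
    Summable fun n : ℕ => ‖u n‖ ^ 2 :=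
  Summable.of_nonneg_of_le (fun n => sq_nonneg _)
    (fun n => le_mul_of_one_le_left (sq_nonneg _)
      (by have := Nat.cast_nonneg (α := ℝ) n; linarith)) hu

/-- Weighted summability of `u` gives summability of `‖u (k+j+c)‖²` over `ℕ × ℕ`. -/
private lemma diag_summable {u : ℕ → ℂ}
    (hu : Summable fun n : ℕ => ((n : ℝ) + 1) * ‖u n‖ ^ 2) (c : ℕ) :
    Summable fun p : ℕ × ℕ => ‖u (p.1 + p.2 + c)‖ ^ 2 := by
  have key : ∀ m : ℕ, (∑' j : ℕ, if j ≤ m then ‖u (m + c)‖ ^ 2 else 0)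
      = ((m : ℝ) + 1) * ‖u (m + c)‖ ^ 2 := by
    intro m
    rw [tsum_eq_sum (s := Finset.range (m + 1))
      (by intro j hj; simp only [Finset.mem_range, not_lt] at hj
          exact if_neg (by omega))]
    rw [Finset.sum_congr rfl
      (fun j hj => if_pos (by simpa [Nat.lt_succ_iff] using Finset.mem_range.mp hj))]
    simp only [Finset.sum_const, Finset.card_range, nsmul_eq_mul]
    push_cast; ring
  have hshift : Summable fun m : ℕ => ((m : ℝ) + 1) * ‖u (m + c)‖ ^ 2 := by
    have h1 : Summable fun m : ℕ => (((m + c : ℕ) : ℝ) + 1) * ‖u (m + c)‖ ^ 2 :=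
      (summable_nat_add_iff (f := fun n : ℕ => ((n : ℝ) + 1) * ‖u n‖ ^ 2) c).mpr hu
    refine Summable.of_nonneg_of_le (fun m => by positivity) (fun m => ?_) h1
    have : ((m : ℝ) + 1) ≤ (((m + c : ℕ) : ℝ) + 1) := by push_cast; linarith [Nat.cast_nonneg (α := ℝ) c]
    exact mul_le_mul_of_nonneg_right this (sq_nonneg _)
  have hG : Summable fun p : ℕ × ℕ => if p.2 ≤ p.1 then ‖u (p.1 + c)‖ ^ 2 else 0 := by
    rw [summable_prod_of_nonneg (fun p => by dsimp only; split <;> positivity)]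
    constructor
    · intro m
      apply summable_of_ne_finset_zero (s := Finset.range (m + 1))
      intro j hj
      simp only [Finset.mem_range, not_lt] at hj
      exact if_neg (by omega)
    · exact hshift.congr fun m => (key m).symm
  have hι : Function.Injective (fun p : ℕ × ℕ => ((p.1 + p.2, p.2) : ℕ × ℕ)) := by
    rintro ⟨a, b⟩ ⟨a', b'⟩ hpq
    simp only [Prod.mk.injEq] at hpq
    obtain ⟨h1, h2⟩ := hpq
    refine Prod.ext ?_ h2
    omega
  exact (hG.comp_injective hι).congr fun p => by simp [Nat.le_add_left]

/-- Absolute summability of the double-sum kernel of `K_u²`/`H_u²`. -/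
private lemma F_summable {u h : ℕ → ℂ}
    (hu : Summable fun n : ℕ => ((n : ℝ) + 1) * ‖u n‖ ^ 2)
    (hh : Summable fun n : ℕ => ‖h n‖ ^ 2) (n c : ℕ) :
    Summable fun p : ℕ × ℕ =>
      u (n + p.1 + c) * ((starRingEnd ℂ) (u (p.1 + p.2 + c)) * h p.2) := by
  have hA : Summable fun k : ℕ => ‖u (n + k + c)‖ ^ 2 := by
    have := (summable_nat_add_iff (f := fun m : ℕ => ‖u m‖ ^ 2) (n + c)).mpr
      (u_sq_summable hu)
    exact this.congr fun k => by rw [show k + (n + c) = n + k + c by omega]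
  have h1 : Summable fun p : ℕ × ℕ => ‖u (n + p.1 + c)‖ ^ 2 * ‖h p.2‖ ^ 2 :=
    summable_mul_of_summable_norm (f := fun k : ℕ => ‖u (n + k + c)‖ ^ 2)
      (g := fun k : ℕ => ‖h k‖ ^ 2)
      (by simpa [sq_abs] using hA.abs) (by simpa [sq_abs] using hh.abs)
  have h2 := diag_summable hu c
  refine Summable.of_norm_bounded (g := fun p : ℕ × ℕ => (‖u (n + p.1 + c)‖ ^ 2 * ‖h p.2‖ ^ 2 + ‖u (p.1 + p.2 + c)‖ ^ 2) / 2)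
    ((h1.add h2).div_const 2) (fun p => ?_)
  have hnorm : ‖u (n + p.1 + c) * ((starRingEnd ℂ) (u (p.1 + p.2 + c)) * h p.2)‖
      = ‖u (n + p.1 + c)‖ * (‖u (p.1 + p.2 + c)‖ * ‖h p.2‖) := by
    simp [norm_mul]
  rw [hnorm]
  nlinarith [two_mul_le_add_sq (‖u (n + p.1 + c)‖ * ‖h p.2‖) (‖u (p.1 + p.2 + c)‖),
    norm_nonneg (u (n + p.1 + c)), norm_nonneg (u (p.1 + p.2 + c)), norm_nonneg (h p.2),
    sq_nonneg (‖u (n + p.1 + c)‖ * ‖h p.2‖)]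

/-- Unfolding a composition of Hankel-type sums as a double sum. -/
private lemma expand_double (a : ℕ → ℂ) (b : ℕ → ℕ → ℂ) (h : ℕ → ℂ)
    (hs : Summable fun p : ℕ × ℕ => a p.1 * ((starRingEnd ℂ) (b p.1 p.2) * h p.2)) :
    ∑' k : ℕ, a k * (starRingEnd ℂ) (∑' j : ℕ, b k j * (starRingEnd ℂ) (h j))
      = ∑' p : ℕ × ℕ, a p.1 * ((starRingEnd ℂ) (b p.1 p.2) * h p.2) := by
  rw [hs.tsum_prod]
  refine tsum_congr fun k => ?_
  have hconj : (starRingEnd ℂ) (∑' j : ℕ, b k j * (starRingEnd ℂ) (h j))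
      = ∑' j : ℕ, (starRingEnd ℂ) (b k j) * h j := by
    rw [starRingEnd_apply, tsum_star]
    exact tsum_congr fun j => by
      simp only [starRingEnd_apply, star_mul, star_star]
      ring
  calc a k * (starRingEnd ℂ) (∑' j : ℕ, b k j * (starRingEnd ℂ) (h j))
      = a k * ∑' j : ℕ, (starRingEnd ℂ) (b k j) * h j := by rw [hconj]
    _ = ∑' j : ℕ, a k * ((starRingEnd ℂ) (b k j) * h j) := tsum_mul_left.symm
    _ = ∑' j : ℕ, a (k, j).1 * ((starRingEnd ℂ) (b (k, j).1 (k, j).2) * h (k, j).2) := rfl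

private lemma telescope {g : ℕ → ℂ} (hg : Summable g) (hg0 : Tendsto g atTop (𝓝 0)) :
    ∑' k : ℕ, (g k - g (k + 1)) = g 0 := by
  have hsum : Summable fun k : ℕ => g k - g (k + 1) :=
    hg.sub ((summable_nat_add_iff 1).mpr hg)
  have ht := hsum.hasSum.tendsto_sum_nat
  have ht2 : Tendsto (fun N => ∑ i ∈ Finset.range N, (g i - g (i + 1))) atTop (𝓝 (g 0)) := by
    simp only [Finset.sum_range_sub']
    simpa using tendsto_const_nhds.sub hg0
  exact tendsto_nhds_unique ht ht2

set_option maxHeartbeats 1600000 in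
/-- For `u` in (the Sobolev space `H^{1/2}` inside) the Hardy space `L²₊(S¹)`,
the shifted Hankel operator `K_u = T_z^* H_u` satisfies
`K_u² = H_u² - (·|u)u`, i.e. for every `h ∈ L²₊`,
`K_u²(h) = H_u²(h) - (h|u) u`. -/
theorem stmt0 (u h : ℕ → ℂ)
    (hu : Summable fun n : ℕ => ((n : ℝ) + 1) * ‖u n‖ ^ 2)
    (hh : Summable fun n : ℕ => ‖h n‖ ^ 2) :
    ∀ n : ℕ, shiftedHankel u (shiftedHankel u h) n
      = hankel u (hankel u h) n - (∑' k : ℕ, h k * (starRingEnd ℂ) (u k)) * u n := by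
  intro n
  have hu2 := u_sq_summable hu
  have hu0 : Tendsto (fun m : ℕ => ‖u m‖) atTop (𝓝 0) := by
    have h1 : Tendsto (fun m : ℕ => ‖u m‖ ^ 2) atTop (𝓝 0) := hu2.tendsto_atTop_zero
    have h2 := (Real.continuous_sqrt.tendsto 0).comp h1
    simpa [Function.comp_def, Real.sqrt_sq (norm_nonneg _)] using h2
  -- the two double-sum kernels
  have S1 := F_summable hu hh n 1
  have S0' := F_summable hu hh n 0
  simp only [add_zero] at S0'
  have e1 : shiftedHankel u (shiftedHankel u h) n
      = ∑' p : ℕ × ℕ, u (n + p.1 + 1) * ((starRingEnd ℂ) (u (p.1 + p.2 + 1)) * h p.2) := by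
    exact expand_double (fun k => u (n + k + 1)) (fun k j => u (k + j + 1)) h S1
  have e0 : hankel u (hankel u h) n
      = ∑' p : ℕ × ℕ, u (n + p.1) * ((starRingEnd ℂ) (u (p.1 + p.2)) * h p.2) := by
    exact expand_double (fun k => u (n + k)) (fun k j => u (k + j)) h S0'
  -- key identity
  have key : (∑' p : ℕ × ℕ, u (n + p.1) * ((starRingEnd ℂ) (u (p.1 + p.2)) * h p.2))
      - (∑' p : ℕ × ℕ, u (n + p.1 + 1) * ((starRingEnd ℂ) (u (p.1 + p.2 + 1)) * h p.2))
      = (∑' k : ℕ, h k * (starRingEnd ℂ) (u k)) * u n := by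
    have hD : Summable fun p : ℕ × ℕ =>
        u (n + p.1) * ((starRingEnd ℂ) (u (p.1 + p.2)) * h p.2)
          - u (n + p.1 + 1) * ((starRingEnd ℂ) (u (p.1 + p.2 + 1)) * h p.2) := S0'.sub S1
    have hDswap : Summable fun q : ℕ × ℕ =>
        u (n + q.2) * ((starRingEnd ℂ) (u (q.2 + q.1)) * h q.1)
          - u (n + q.2 + 1) * ((starRingEnd ℂ) (u (q.2 + q.1 + 1)) * h q.1) := hD.prod_symm
    -- now the outer sum is over j, inner over k
    have inner : ∀ j : ℕ, (∑' k : ℕ,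
        (u (n + k) * ((starRingEnd ℂ) (u (k + j)) * h j)
          - u (n + k + 1) * ((starRingEnd ℂ) (u (k + j + 1)) * h j)))
        = (u n * (starRingEnd ℂ) (u j)) * h j := by
      intro j
      set g : ℕ → ℂ := fun k => u (n + k) * (starRingEnd ℂ) (u (k + j)) with hgdef
      have hgsum : Summable g := by
        have hA : Summable fun k : ℕ => ‖u (n + k)‖ ^ 2 := by
          have := (summable_nat_add_iff (f := fun m : ℕ => ‖u m‖ ^ 2) n).mpr hu2
          exact this.congr fun k => by rw [show k + n = n + k by omega]
        have hB : Summable fun k : ℕ => ‖u (k + j)‖ ^ 2 :=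
          (summable_nat_add_iff (f := fun m : ℕ => ‖u m‖ ^ 2) j).mpr hu2
        refine Summable.of_norm_bounded (g := fun k : ℕ => (‖u (n + k)‖ ^ 2 + ‖u (k + j)‖ ^ 2) / 2)
          ((hA.add hB).div_const 2) (fun k => ?_)
        have : ‖g k‖ = ‖u (n + k)‖ * ‖u (k + j)‖ := by simp [hgdef, norm_mul]
        rw [this]
        nlinarith [two_mul_le_add_sq (‖u (n + k)‖) (‖u (k + j)‖)]
      have hg0 : Tendsto g atTop (𝓝 0) := by
        rw [tendsto_zero_iff_norm_tendsto_zero]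
        have h1 : Tendsto (fun k : ℕ => ‖u (n + k)‖) atTop (𝓝 0) :=
          hu0.comp (tendsto_atTop_atTop.mpr fun b => ⟨b, fun a ha => by omega⟩)
        have h2 : Tendsto (fun k : ℕ => ‖u (k + j)‖) atTop (𝓝 0) :=
          hu0.comp (tendsto_atTop_atTop.mpr fun b => ⟨b, fun a ha => by omega⟩)
        have := h1.mul h2
        simp only [mul_zero] at this
        refine this.congr fun k => ?_
        simp [hgdef, norm_mul]
      have hterm : ∀ k : ℕ,
          u (n + k) * ((starRingEnd ℂ) (u (k + j)) * h j)
            - u (n + k + 1) * ((starRingEnd ℂ) (u (k + j + 1)) * h j)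
          = (g k - g (k + 1)) * h j := by
        intro k
        simp only [hgdef]
        rw [show n + (k + 1) = n + k + 1 by omega, show k + 1 + j = k + j + 1 by omega]
        ring
      calc (∑' k : ℕ, (u (n + k) * ((starRingEnd ℂ) (u (k + j)) * h j)
              - u (n + k + 1) * ((starRingEnd ℂ) (u (k + j + 1)) * h j)))
          = ∑' k : ℕ, (g k - g (k + 1)) * h j := tsum_congr hterm
        _ = (∑' k : ℕ, (g k - g (k + 1))) * h j := by rw [tsum_mul_right]
        _ = g 0 * h j := by rw [telescope hgsum hg0]
        _ = (u n * (starRingEnd ℂ) (u j)) * h j := by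
            simp [hgdef]
    calc (∑' p : ℕ × ℕ, u (n + p.1) * ((starRingEnd ℂ) (u (p.1 + p.2)) * h p.2))
        - (∑' p : ℕ × ℕ, u (n + p.1 + 1) * ((starRingEnd ℂ) (u (p.1 + p.2 + 1)) * h p.2))
        = ∑' p : ℕ × ℕ,
            (u (n + p.1) * ((starRingEnd ℂ) (u (p.1 + p.2)) * h p.2)
              - u (n + p.1 + 1) * ((starRingEnd ℂ) (u (p.1 + p.2 + 1)) * h p.2)) :=
          (S0'.tsum_sub S1).symm
      _ = ∑' q : ℕ × ℕ,
            (u (n + q.2) * ((starRingEnd ℂ) (u (q.2 + q.1)) * h q.1)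
              - u (n + q.2 + 1) * ((starRingEnd ℂ) (u (q.2 + q.1 + 1)) * h q.1)) :=
          ((Equiv.prodComm ℕ ℕ).tsum_eq _).symm
      _ = ∑' (j : ℕ) (k : ℕ),
            (u (n + k) * ((starRingEnd ℂ) (u (k + j)) * h j)
              - u (n + k + 1) * ((starRingEnd ℂ) (u (k + j + 1)) * h j)) :=
          hDswap.tsum_prod
      _ = ∑' j : ℕ, (u n * (starRingEnd ℂ) (u j)) * h j := tsum_congr inner
      _ = ∑' j : ℕ, u n * (h j * (starRingEnd ℂ) (u j)) := tsum_congr fun j => by ring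
      _ = u n * ∑' j : ℕ, h j * (starRingEnd ℂ) (u j) := tsum_mul_left
      _ = (∑' k : ℕ, h k * (starRingEnd ℂ) (u k)) * u n := by ring
  rw [e1, e0]
  linear_combination -key
end

section
/- For u sufficiently smooth (say u ∈ H^s_+ with s > 1), the Hankel operator of Π(|u|^2 u) satisfies the identity H_{Π(|u|^2 u)} = T_{|u|^2} H_u + H_u T_{|u|^2} - H_u^3. -/
open scoped BigOperators

set_option maxHeartbeats 1000000

/-- Convolution of Fourier coefficient sequences on `ℤ` (Fourier coefficients of a product). -/
noncomputable def conv (a b : ℤ → ℂ) : ℤ → ℂ := fun n => ∑' k : ℤ, a k * b (n - k)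

/-- Fourier coefficients of the complex conjugate: `(conj a)^(n) = conj(â(-n))`. -/
noncomputable def cstar (a : ℤ → ℂ) : ℤ → ℂ := fun n => (starRingEnd ℂ) (a (-n))

/-- The Szegő projector `Π` onto nonnegative frequencies. -/
noncomputable def szego (a : ℤ → ℂ) : ℤ → ℂ := fun n => if 0 ≤ n then a n else 0

/-- The Hankel operator `H_u(h) = Π(u ⬝ conj h)` in Fourier coefficients. -/
noncomputable def hankelOp (u h : ℤ → ℂ) : ℤ → ℂ := szego (conv u (cstar h))

/-- The Toeplitz operator `T_b(h) = Π(b h)` in Fourier coefficients. -/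
noncomputable def toeplitzOp (b h : ℤ → ℂ) : ℤ → ℂ := szego (conv b h)

/- ### Auxiliary material -/

lemma inv_one_add_sq_summable : Summable (fun k : ℤ => ((1:ℝ) + (k:ℝ)^2)⁻¹) := by
  have key : Summable (fun n : ℕ => ((1:ℝ) + (n:ℝ)^2)⁻¹) := by
    have h2 : Summable (fun n : ℕ => 2 / ((n:ℝ)+1)^2) := by
      have := (Real.summable_one_div_nat_pow (p := 2)).mpr (by norm_num)
      have := ((summable_nat_add_iff 1).mpr this).mul_left 2
      simpa [div_eq_mul_inv, one_div] using this
    apply h2.of_nonneg_of_le (fun n => by positivity)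
    intro n
    rw [inv_eq_one_div, div_le_div_iff₀ (by positivity) (by positivity)]
    nlinarith [sq_nonneg ((n:ℝ)-1)]
  apply Summable.of_nat_of_neg
  · simpa using key
  · have : ∀ n : ℕ, ((1:ℝ) + ((-(n:ℤ)):ℝ)^2)⁻¹ = ((1:ℝ) + (n:ℝ)^2)⁻¹ := by
      intro n; push_cast; ring_nf
    simpa [this] using key

lemma summable_norm_of_reg {s : ℝ} (hs : 1 < s) (u : ℤ → ℂ)
    (hreg : Summable fun n : ℤ => (1 + (n : ℝ) ^ 2) ^ s * ‖u n‖ ^ 2) :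
    Summable (fun k : ℤ => ‖u k‖) := by
  have hb : Summable (fun k : ℤ => (((1:ℝ) + (k:ℝ)^2)⁻¹ + (1 + (k:ℝ)^2) ^ s * ‖u k‖ ^ 2)/2) :=
    (inv_one_add_sq_summable.add hreg).div_const 2
  apply hb.of_nonneg_of_le (fun k => norm_nonneg _)
  intro k
  set c : ℝ := 1 + (k:ℝ)^2 with hc
  have hc1 : (1:ℝ) ≤ c := by nlinarith [sq_nonneg ((k:ℝ))]
  have hc0 : (0:ℝ) < c := by linarith
  set x : ℝ := c ^ (-(s/2)) with hx
  set y : ℝ := c ^ (s/2) * ‖u k‖ with hy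
  have hxy : x * y = ‖u k‖ := by
    rw [hx, hy, ← mul_assoc, ← Real.rpow_add hc0]; norm_num
  have hx2 : x^2 = c ^ (-s) := by
    rw [hx, ← Real.rpow_natCast (c ^ (-(s/2))) 2, ← Real.rpow_mul hc0.le]; norm_num
  have hy2 : y^2 = c ^ s * ‖u k‖^2 := by
    rw [hy, mul_pow, ← Real.rpow_natCast (c ^ (s/2)) 2, ← Real.rpow_mul hc0.le]; norm_num
  have hxle : c ^ (-s) ≤ c⁻¹ := by
    rw [← Real.rpow_neg_one c]
    exact Real.rpow_le_rpow_of_exponent_le hc1 (by linarith)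
  nlinarith [sq_nonneg (x - y)]

/-- Collapsing a triple iterated `tsum` into a `tsum` over the product. -/
lemma tsum3 {f : ℤ × ℤ × ℤ → ℂ} (hf : Summable f) :
    ∑' (x : ℤ) (y : ℤ) (z : ℤ), f (x, y, z) = ∑' p, f p := by
  rw [Summable.tsum_prod' hf hf.prod_factor]
  exact tsum_congr fun x => (Summable.tsum_prod' (hf.prod_factor x) (hf.prod_factor x).prod_factor).symm

/-- Collapse a triple iterated sum into a sum over the product, after a change of variables. -/
lemma collapse {f : ℤ × ℤ × ℤ → ℂ} (hf : Summable f) (e : (ℤ × ℤ × ℤ) ≃ (ℤ × ℤ × ℤ))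
    (g : ℤ → ℤ → ℤ → ℂ) (hg : ∀ x y z, g x y z = f (e (x, y, z))) :
    ∑' (x : ℤ) (y : ℤ) (z : ℤ), g x y z = ∑' p, f p := by
  have hfe : Summable (f ∘ e) := e.summable_iff.mpr hf
  calc ∑' (x : ℤ) (y : ℤ) (z : ℤ), g x y z
      = ∑' (x : ℤ) (y : ℤ) (z : ℤ), (f ∘ e) (x, y, z) :=
        tsum_congr fun x => tsum_congr fun y => tsum_congr fun z => hg x y z
    _ = ∑' p, (f ∘ e) p := tsum3 hfe
    _ = ∑' p, f p := e.tsum_eq f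

/-- The base term of the master triple sum. -/
noncomputable def Tf (u h : ℤ → ℂ) (n : ℤ) : ℤ × ℤ × ℤ → ℂ := fun p =>
  u p.1 * (starRingEnd ℂ) (u p.2.1) * (u p.2.2 * (starRingEnd ℂ) (h (p.1 + p.2.2 - p.2.1 - n)))

noncomputable def TfA (u h : ℤ → ℂ) (n : ℤ) : ℤ × ℤ × ℤ → ℂ := fun p =>
  if p.1 - p.2.1 ≤ n then Tf u h n p else 0

noncomputable def TfC (u h : ℤ → ℂ) (n : ℤ) : ℤ × ℤ × ℤ → ℂ := fun p =>
  if n ≤ p.1 then Tf u h n p else 0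

noncomputable def TfAC (u h : ℤ → ℂ) (n : ℤ) : ℤ × ℤ × ℤ → ℂ := fun p =>
  if p.1 - p.2.1 ≤ n ∧ n ≤ p.1 then Tf u h n p else 0

lemma Tf_norm {u h : ℤ → ℂ} {M : ℝ} (hM : ∀ m : ℤ, ‖h m‖ ≤ M) (n : ℤ) (p : ℤ × ℤ × ℤ) :
    ‖Tf u h n p‖ ≤ ‖u p.1‖ * (‖u p.2.1‖ * (‖u p.2.2‖ * M)) := by
  have h1 : ‖Tf u h n p‖
      = ‖u p.1‖ * (‖u p.2.1‖ * (‖u p.2.2‖ * ‖h (p.1 + p.2.2 - p.2.1 - n)‖)) := by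
    simp [Tf, norm_mul]; ring
  rw [h1]
  gcongr
  · exact hM _

lemma summable_master {u h : ℤ → ℂ} {M : ℝ} (hM0 : 0 ≤ M)
    (hu1 : Summable fun k : ℤ => ‖u k‖) :
    Summable (fun p : ℤ × ℤ × ℤ => ‖u p.1‖ * (‖u p.2.1‖ * (‖u p.2.2‖ * M))) := by
  have hf0 : (0:ℤ → ℝ) ≤ fun k : ℤ => ‖u k‖ := by
    intro k; exact norm_nonneg _
  have hgM : Summable (fun k : ℤ => ‖u k‖ * M) := hu1.mul_right M
  have hg0 : (0:ℤ → ℝ) ≤ fun k : ℤ => ‖u k‖ * M := by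
    intro k; exact mul_nonneg (norm_nonneg _) hM0
  have h1 : Summable (fun q : ℤ × ℤ => ‖u q.1‖ * (‖u q.2‖ * M)) :=
    hu1.mul_of_nonneg hgM hf0 hg0
  have h10 : (0:ℤ × ℤ → ℝ) ≤ fun q : ℤ × ℤ => ‖u q.1‖ * (‖u q.2‖ * M) := by
    intro q; exact mul_nonneg (norm_nonneg _) (mul_nonneg (norm_nonneg _) hM0)
  exact hu1.mul_of_nonneg h1 hf0 h10


lemma conv_eval (a c : ℤ → ℂ) (m : ℤ) : conv a c m = ∑' k : ℤ, a k * c (m - k) := rfl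

lemma conj_tsum (f : ℤ → ℂ) :
    (starRingEnd ℂ) (∑' k : ℤ, f k) = ∑' k : ℤ, (starRingEnd ℂ) (f k) := by
  simpa only [starRingEnd_apply] using tsum_star (f := f)

lemma b_eval (u : ℤ → ℂ) (m : ℤ) :
    conv u (cstar u) m = ∑' j : ℤ, u j * (starRingEnd ℂ) (u (j - m)) := by
  simp only [conv, cstar, neg_sub]

lemma hankel_eval (u g : ℤ → ℂ) (m : ℤ) :
    hankelOp u g m = if 0 ≤ m then ∑' k : ℤ, u k * (starRingEnd ℂ) (g (k - m)) else 0 := by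
  simp only [hankelOp, szego, conv, cstar, neg_sub]

lemma toeplitz_eval (b g : ℤ → ℂ) (m : ℤ) :
    toeplitzOp b g m = if 0 ≤ m then ∑' k : ℤ, b k * g (m - k) else 0 := by
  simp only [toeplitzOp, szego, conv]

/-- Change of variables for the `H_{Π(|u|²u)}` term. -/
def eLHS : (ℤ × ℤ × ℤ) ≃ (ℤ × ℤ × ℤ) where
  toFun p := (p.2.2, p.2.2 - p.2.1, p.1 - p.2.1)
  invFun q := (q.2.2 + q.1 - q.2.1, q.1 - q.2.1, q.1)
  left_inv := by rintro ⟨a, b, c⟩; dsimp only; rw [Prod.mk.injEq, Prod.mk.injEq]; omega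
  right_inv := by rintro ⟨a, b, c⟩; dsimp only; rw [Prod.mk.injEq, Prod.mk.injEq]; omega

/-- Change of variables for the `T_b H_u` term. -/
def eT1 : (ℤ × ℤ × ℤ) ≃ (ℤ × ℤ × ℤ) where
  toFun p := (p.2.2, p.2.2 - p.1, p.2.1)
  invFun q := (q.1 - q.2.1, q.2.2, q.1)
  left_inv := by rintro ⟨a, b, c⟩; dsimp only; rw [Prod.mk.injEq, Prod.mk.injEq]; omega
  right_inv := by rintro ⟨a, b, c⟩; dsimp only; rw [Prod.mk.injEq, Prod.mk.injEq]; omega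

/-- Change of variables for the `H_u T_b` term. -/
def eT2 : (ℤ × ℤ × ℤ) ≃ (ℤ × ℤ × ℤ) where
  toFun p := (p.1, p.2.2, p.2.2 - p.2.1)
  invFun q := (q.1, q.2.1 - q.2.2, q.2.1)
  left_inv := by rintro ⟨a, b, c⟩; dsimp only; rw [Prod.mk.injEq, Prod.mk.injEq]; omega
  right_inv := by rintro ⟨a, b, c⟩; dsimp only; rw [Prod.mk.injEq, Prod.mk.injEq]; omega

lemma szego_apply_nonneg (a : ℤ → ℂ) {n : ℤ} (hn : 0 ≤ n) : szego a n = a n := if_pos hn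

/-- For `u ∈ H^s₊(S¹)` with `s > 1`, the identity
`H_{Π(|u|²u)} = T_{|u|²} H_u + H_u T_{|u|²} - H_u³` holds
(here `|u|² = u ⬝ conj u` has coefficients `conv u (cstar u)`, and
`|u|²u` has coefficients `conv (conv u (cstar u)) u`). -/
theorem stmt3 (s : ℝ) (hs : 1 < s) (u : ℤ → ℂ)
    (hsupp : ∀ n : ℤ, n < 0 → u n = 0)
    (hreg : Summable fun n : ℤ => (1 + (n : ℝ) ^ 2) ^ s * ‖u n‖ ^ 2)
    (h : ℤ → ℂ) (hhsupp : ∀ n : ℤ, n < 0 → h n = 0)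
    (hh : Summable fun n : ℤ => ‖h n‖ ^ 2) :
    ∀ n : ℤ, hankelOp (szego (conv (conv u (cstar u)) u)) h n
      = toeplitzOp (conv u (cstar u)) (hankelOp u h) n
        + hankelOp u (toeplitzOp (conv u (cstar u)) h) n
        - hankelOp u (hankelOp u (hankelOp u h)) n := by
  intro n
  by_cases hn : 0 ≤ n
  swap
  · simp [hankelOp, toeplitzOp, szego, hn]
  -- bound on h
  obtain ⟨M, hM0, hM⟩ : ∃ M : ℝ, 0 ≤ M ∧ ∀ m : ℤ, ‖h m‖ ≤ M := by
    refine ⟨Real.sqrt (∑' k : ℤ, ‖h k‖ ^ 2), Real.sqrt_nonneg _, fun m => ?_⟩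
    have h1 : ‖h m‖ ^ 2 ≤ ∑' k : ℤ, ‖h k‖ ^ 2 := Summable.le_tsum hh m (fun j _ => by positivity)
    calc ‖h m‖ = Real.sqrt (‖h m‖ ^ 2) := by rw [Real.sqrt_sq (norm_nonneg _)]
      _ ≤ _ := Real.sqrt_le_sqrt h1
  have hu1 : Summable fun k : ℤ => ‖u k‖ := summable_norm_of_reg hs u hreg
  have hg := summable_master (u := u) (h := h) hM0 hu1
  have hTsum : Summable (Tf u h n) := Summable.of_norm_bounded hg (Tf_norm hM n)
  have hTA : Summable (TfA u h n) := by
    apply Summable.of_norm_bounded hg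
    intro p
    by_cases hc : p.1 - p.2.1 ≤ n
    · simpa [TfA, hc] using Tf_norm hM n p
    · simp only [TfA, if_neg hc, norm_zero]; positivity
  have hTC : Summable (TfC u h n) := by
    apply Summable.of_norm_bounded hg
    intro p
    by_cases hc : n ≤ p.1
    · simpa [TfC, hc] using Tf_norm hM n p
    · simp only [TfC, if_neg hc, norm_zero]; positivity
  have hTAC : Summable (TfAC u h n) := by
    apply Summable.of_norm_bounded hg
    intro p
    by_cases hc : p.1 - p.2.1 ≤ n ∧ n ≤ p.1
    · simpa [TfAC, hc] using Tf_norm hM n p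
    · simp only [TfAC, if_neg hc, norm_zero]; positivity
  -- pointwise inclusion-exclusion
  have hpt : ∀ p : ℤ × ℤ × ℤ, Tf u h n p = TfA u h n p + TfC u h n p - TfAC u h n p := by
    intro p
    by_cases h1 : p.1 - p.2.1 ≤ n <;> by_cases h2 : n ≤ p.1
    · simp only [TfA, TfC, TfAC, if_pos h1, if_pos h2, if_pos (And.intro h1 h2)]; ring
    · have : ¬(p.1 - p.2.1 ≤ n ∧ n ≤ p.1) := by tauto
      simp only [TfA, TfC, TfAC, if_pos h1, if_neg h2, if_neg this]; ring
    · have : ¬(p.1 - p.2.1 ≤ n ∧ n ≤ p.1) := by tauto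
      simp only [TfA, TfC, TfAC, if_neg h1, if_pos h2, if_neg this]; ring
    · have : ¬(p.1 - p.2.1 ≤ n ∧ n ≤ p.1) := by tauto
      have hz : u p.2.1 = 0 := hsupp _ (by omega)
      simp only [TfA, TfC, TfAC, if_neg h1, if_neg h2, if_neg this, Tf, hz, map_zero,
        mul_zero, zero_mul, add_zero, sub_zero]
  have hsplit : ∑' p, Tf u h n p
      = (∑' p, TfA u h n p) + (∑' p, TfC u h n p) - ∑' p, TfAC u h n p := by
    calc ∑' p, Tf u h n p = ∑' p, (TfA u h n p + TfC u h n p - TfAC u h n p) := tsum_congr hpt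
      _ = (∑' p, (TfA u h n p + TfC u h n p)) - ∑' p, TfAC u h n p :=
          Summable.tsum_sub (hTA.add hTC) hTAC
      _ = _ := by rw [Summable.tsum_add hTA hTC]
  -- the four sides
  have hLHS : hankelOp (szego (conv (conv u (cstar u)) u)) h n = ∑' p, Tf u h n p := by
    calc hankelOp (szego (conv (conv u (cstar u)) u)) h n
        = ∑' k : ℤ, szego (conv (conv u (cstar u)) u) k * (starRingEnd ℂ) (h (k - n)) := by
          rw [hankel_eval, if_pos hn]
      _ = ∑' (x : ℤ) (y : ℤ) (z : ℤ),
            u z * (starRingEnd ℂ) (u (z - y)) * (u (x - y) * (starRingEnd ℂ) (h (x - n))) := by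
          refine tsum_congr fun x => ?_
          by_cases hx : 0 ≤ x
          · rw [szego_apply_nonneg _ hx, conv_eval, ← tsum_mul_right]
            refine tsum_congr fun y => ?_
            rw [b_eval, mul_assoc, ← tsum_mul_right]
          · have hz : h (x - n) = 0 := hhsupp _ (by omega)
            simp [szego, hx, hz]
      _ = ∑' p, Tf u h n p := by
          refine collapse hTsum eLHS _ fun x y z => ?_
          simp only [Tf, eLHS, Equiv.coe_fn_mk]
          rw [show x - n = z + (x - y) - (z - y) - n from by ring]
  have ht1 : toeplitzOp (conv u (cstar u)) (hankelOp u h) n = ∑' p, TfA u h n p := by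
    calc toeplitzOp (conv u (cstar u)) (hankelOp u h) n
        = ∑' x : ℤ, conv u (cstar u) x * hankelOp u h (n - x) := by
          rw [toeplitz_eval, if_pos hn]
      _ = ∑' (x : ℤ) (y : ℤ) (z : ℤ),
            (if 0 ≤ n - x then
              u z * (starRingEnd ℂ) (u (z - x)) * (u y * (starRingEnd ℂ) (h (y - (n - x))))
            else 0) := by
          refine tsum_congr fun x => ?_
          rw [hankel_eval]
          by_cases hc : 0 ≤ n - x
          · simp only [if_pos hc]
            rw [← tsum_mul_left]
            refine tsum_congr fun y => ?_
            rw [b_eval, ← tsum_mul_right]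
          · simp only [if_neg hc, mul_zero, tsum_zero]
      _ = ∑' p, TfA u h n p := by
          refine collapse hTA eT1 _ fun x y z => ?_
          simp only [TfA, Tf, eT1, Equiv.coe_fn_mk]
          rw [show y - (n - x) = z + y - (z - x) - n from by ring]
          exact if_congr (by omega) rfl rfl
  have ht2 : hankelOp u (toeplitzOp (conv u (cstar u)) h) n = ∑' p, TfC u h n p := by
    calc hankelOp u (toeplitzOp (conv u (cstar u)) h) n
        = ∑' x : ℤ, u x * (starRingEnd ℂ) (toeplitzOp (conv u (cstar u)) h (x - n)) := by
          rw [hankel_eval, if_pos hn]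
      _ = ∑' (x : ℤ) (y : ℤ) (z : ℤ),
            (if 0 ≤ x - n then
              u x * (starRingEnd ℂ) (u z) * (u (z - y) * (starRingEnd ℂ) (h (x - n - y)))
            else 0) := by
          refine tsum_congr fun x => ?_
          rw [toeplitz_eval]
          by_cases hc : 0 ≤ x - n
          · simp only [if_pos hc]
            rw [conj_tsum, ← tsum_mul_left]
            refine tsum_congr fun y => ?_
            rw [map_mul, b_eval, conj_tsum]
            simp only [map_mul, Complex.conj_conj]
            rw [← tsum_mul_right, ← tsum_mul_left]
            exact tsum_congr fun z => by ring
          · simp only [if_neg hc, map_zero, mul_zero, tsum_zero]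
      _ = ∑' p, TfC u h n p := by
          refine collapse hTC eT2 _ fun x y z => ?_
          simp only [TfC, Tf, eT2, Equiv.coe_fn_mk]
          rw [show x - n - y = x + (z - y) - z - n from by ring]
          exact if_congr (by omega) rfl rfl
  have ht3 : hankelOp u (hankelOp u (hankelOp u h)) n = ∑' p, TfAC u h n p := by
    calc hankelOp u (hankelOp u (hankelOp u h)) n
        = ∑' x : ℤ, u x * (starRingEnd ℂ) (hankelOp u (hankelOp u h) (x - n)) := by
          rw [hankel_eval, if_pos hn]
      _ = ∑' (x : ℤ) (y : ℤ) (z : ℤ),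
            (if 0 ≤ x - n then
              (if 0 ≤ y - (x - n) then
                u x * (starRingEnd ℂ) (u y) * (u z * (starRingEnd ℂ) (h (z - (y - (x - n)))))
              else 0)
            else 0) := by
          refine tsum_congr fun x => ?_
          rw [hankel_eval u (hankelOp u h)]
          by_cases hc : 0 ≤ x - n
          · simp only [if_pos hc]
            rw [conj_tsum, ← tsum_mul_left]
            refine tsum_congr fun y => ?_
            simp only [map_mul, Complex.conj_conj]
            rw [hankel_eval u h]
            by_cases hc2 : 0 ≤ y - (x - n)
            · simp only [if_pos hc2]
              rw [← tsum_mul_left, ← tsum_mul_left]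
              exact tsum_congr fun z => by ring
            · simp only [if_neg hc2, mul_zero, tsum_zero]
          · simp only [if_neg hc, map_zero, mul_zero, tsum_zero]
      _ = ∑' p, TfAC u h n p := by
          refine collapse hTAC (Equiv.refl _) _ fun x y z => ?_
          simp only [TfAC, Tf, Equiv.refl_apply]
          rw [show z - (y - (x - n)) = x + z - y - n from by ring]
          by_cases hc1 : 0 ≤ x - n
          · by_cases hc2 : 0 ≤ y - (x - n)
            · rw [if_pos hc1, if_pos hc2]; exact (if_pos (show x - y ≤ n ∧ n ≤ x by omega)).symm
            · rw [if_pos hc1, if_neg hc2]; exact (if_neg (show ¬(x - y ≤ n ∧ n ≤ x) by omega)).symm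
          · rw [if_neg hc1]; exact (if_neg (show ¬(x - y ≤ n ∧ n ≤ x) by omega)).symm
  rw [hLHS, ht1, ht2, ht3, hsplit]
end

section
/- Let u = b + cz/(1-pz) with |p| < 1 and let Q = |b|^2 + |c|^2/(1-|p|^2), E_α = (1/4)(1/2π)∫|u|^4 dθ + (α/2)|b|^2 for a real α. Then the equality E_α = Q^2/4 + αQ/2 holds if and only if |b + conj(p)c/(1-|p|^2)| = √α (in particular this requires α ≥ 0). -/
private lemma stmt8_aux (b c p : ℂ) (hd : (0:ℝ) < 1 - ‖p‖^2) :
    ‖b + (starRingEnd ℂ) p * c / (((1 - ‖p‖ ^ 2 : ℝ)) : ℂ)‖^2 * (1 - ‖p‖^2)^2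
    = ‖b‖^2*(1-‖p‖^2)^2 + 2*(b*p*(starRingEnd ℂ) c).re*(1-‖p‖^2) + ‖p‖^2*‖c‖^2 := by
  have hd' : ((1 - ‖p‖^2 : ℝ) : ℂ) ≠ 0 := by exact_mod_cast ne_of_gt hd
  have h1 : b + (starRingEnd ℂ) p * c / (((1 - ‖p‖ ^ 2 : ℝ)) : ℂ)
      = (b * (((1 - ‖p‖ ^ 2 : ℝ)) : ℂ) + (starRingEnd ℂ) p * c) / (((1 - ‖p‖ ^ 2 : ℝ)) : ℂ) := by
    rw [add_div, mul_div_cancel_right₀ _ hd']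
  rw [h1, norm_div, Complex.norm_real, Real.norm_of_nonneg hd.le, div_pow,
    div_mul_cancel₀ _ (by positivity)]
  simp only [Complex.sq_norm, Complex.normSq_apply, Complex.add_re,
    Complex.add_im, Complex.mul_re, Complex.mul_im, Complex.ofReal_re, Complex.ofReal_im,
    Complex.conj_re, Complex.conj_im]
  ring

/-- For `u = b + cz/(1-pz)` with `|p| < 1`, `c ≠ 0`, with
`Q = |b|² + |c|²/(1-|p|²)` (squared `L²` norm),
`E_α = (1/4)(1/2π)∫|u|⁴ + (α/2)|b|²` (the `L⁴` integral being given by its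
explicit value), the equality `E_α = Q²/4 + αQ/2` holds if and only if
`α ≥ 0` and `|b + conj(p) c /(1-|p|²)| = √α`. -/
theorem stmt8 (α : ℝ) (b c p : ℂ) (hp : ‖p‖ < 1) (hc : c ≠ 0) :
    ((1 / 4) * (‖b‖ ^ 4 + 4 * ‖b‖ ^ 2 * ‖c‖ ^ 2 / (1 - ‖p‖ ^ 2)
        + ‖c‖ ^ 4 * (1 + ‖p‖ ^ 2) / (1 - ‖p‖ ^ 2) ^ 3
        + 4 * ‖c‖ ^ 2 * (b * p * (starRingEnd ℂ) c).re / (1 - ‖p‖ ^ 2) ^ 2)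
      + (α / 2) * ‖b‖ ^ 2
      = (‖b‖ ^ 2 + ‖c‖ ^ 2 / (1 - ‖p‖ ^ 2)) ^ 2 / 4
        + α * (‖b‖ ^ 2 + ‖c‖ ^ 2 / (1 - ‖p‖ ^ 2)) / 2)
    ↔ (0 ≤ α ∧
        ‖b + (starRingEnd ℂ) p * c / (((1 - ‖p‖ ^ 2 : ℝ)) : ℂ)‖ = Real.sqrt α) := by
  have hd : (0:ℝ) < 1 - ‖p‖^2 := by nlinarith [norm_nonneg p]
  have hd0 : (1 - ‖p‖^2 : ℝ) ≠ 0 := ne_of_gt hd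
  have hC : (0:ℝ) < ‖c‖^2 := pow_pos (norm_pos_iff.mpr hc) 2
  set x := b + (starRingEnd ℂ) p * c / (((1 - ‖p‖ ^ 2 : ℝ)) : ℂ) with hxdef
  have hX := stmt8_aux b c p hd
  set B := ‖b‖^2
  set C := ‖c‖^2
  set P := ‖p‖^2
  set R := (b * p * (starRingEnd ℂ) c).re
  have factor : (1 / 4) * (B ^ 2 + 4 * B * C / (1 - P) + C ^ 2 * (1 + P) / (1 - P) ^ 3
        + 4 * C * R / (1 - P) ^ 2) + (α / 2) * B
      - ((B + C / (1 - P)) ^ 2 / 4 + α * (B + C / (1 - P)) / 2)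
      = (C / (2 * (1 - P) ^ 3)) * (B * (1 - P) ^ 2 + 2 * R * (1 - P) + P * C
          - α * (1 - P) ^ 2) := by
    field_simp
    ring
  have hB4 : B ^ 2 = ‖b‖ ^ 4 := by rw [← pow_mul]
  have hC4 : C ^ 2 = ‖c‖ ^ 4 := by rw [← pow_mul]
  rw [← hB4, ← hC4]
  constructor
  · intro h
    have h0 : (C / (2 * (1 - P) ^ 3)) * (B * (1 - P) ^ 2 + 2 * R * (1 - P) + P * C
        - α * (1 - P) ^ 2) = 0 := by rw [← factor]; linarith [h]
    have hcoef : C / (2 * (1 - P) ^ 3) ≠ 0 := by positivity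
    have h1 : B * (1 - P) ^ 2 + 2 * R * (1 - P) + P * C - α * (1 - P) ^ 2 = 0 :=
      (mul_eq_zero.mp h0).resolve_left hcoef
    have hxα : ‖x‖ ^ 2 = α := by
      have := mul_right_cancel₀ (pow_ne_zero 2 hd0)
        (show ‖x‖ ^ 2 * (1 - P) ^ 2 = α * (1 - P) ^ 2 by rw [hX]; linarith)
      exact this
    refine ⟨hxα ▸ (by positivity), ?_⟩
    rw [← hxα, Real.sqrt_sq (norm_nonneg x)]
  · rintro ⟨hα, hx⟩
    have hxα : ‖x‖ ^ 2 = α := by rw [hx, Real.sq_sqrt hα]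
    have h1 : B * (1 - P) ^ 2 + 2 * R * (1 - P) + P * C - α * (1 - P) ^ 2 = 0 := by
      rw [← hxα]; linarith [hX]
    have := factor
    rw [h1, mul_zero] at this
    linarith [this]
end

section
/- Let b, c, p : ℝ → ℂ be C^1 functions with |p(t)| < 1 and c(t) ≠ 0, solving the ODE system i b' = |b|^2 b + 2b|c|^2/(1-|p|^2) + |c|^2 c conj(p)/(1-|p|^2)^2 + αb, i c' = 2|b|^2 c + 2b|c|^2 p/(1-|p|^2) + |c|^2 c/(1-|p|^2)^2, i p' = c conj(b) + |c|^2 p/(1-|p|^2). Then d|c|/dt = (2|c|/(1-|p|^2)) · Im(b p conj(c)). -/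
/-- Right-hand side of the `b` equation: `b' = -i(|b|²b + 2b|c|²/(1-|p|²)
  + |c|²c p̄/(1-|p|²)² + αb)`. -/
noncomputable def rhsB (α : ℝ) (b c p : ℂ) : ℂ :=
  -Complex.I * ((‖b‖ ^ 2 : ℝ) * b + 2 * b * (‖c‖ ^ 2 : ℝ) / ((1 - ‖p‖ ^ 2 : ℝ) : ℂ)
    + (‖c‖ ^ 2 : ℝ) * c * (starRingEnd ℂ) p / ((1 - ‖p‖ ^ 2 : ℝ) : ℂ) ^ 2 + (α : ℂ) * b)

/-- Right-hand side of the `c` equation: `c' = -i(2|b|²c + 2b|c|²p/(1-|p|²)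
  + |c|²c/(1-|p|²)²)`. -/
noncomputable def rhsC (b c p : ℂ) : ℂ :=
  -Complex.I * (2 * (‖b‖ ^ 2 : ℝ) * c + 2 * b * (‖c‖ ^ 2 : ℝ) * p / ((1 - ‖p‖ ^ 2 : ℝ) : ℂ)
    + (‖c‖ ^ 2 : ℝ) * c / ((1 - ‖p‖ ^ 2 : ℝ) : ℂ) ^ 2)

/-- Right-hand side of the `p` equation: `p' = -i(c b̄ + |c|²p/(1-|p|²))`. -/
noncomputable def rhsP (b c p : ℂ) : ℂ :=
  -Complex.I * (c * (starRingEnd ℂ) b + (‖c‖ ^ 2 : ℝ) * p / ((1 - ‖p‖ ^ 2 : ℝ) : ℂ))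

/-- If `b, c, p : ℝ → ℂ` are `C¹`, with `|p(t)| < 1` and `c(t) ≠ 0`, and solve
the ODE system of the α-Szegő equation on `u = b + cz/(1-pz)`, then
`d|c|/dt = (2|c|/(1-|p|²)) Im(b p c̄)`. -/
theorem stmt10 (α : ℝ) (b c p : ℝ → ℂ)
    (hp1 : ∀ t, ‖p t‖ < 1) (hc0 : ∀ t, c t ≠ 0)
    (hb : ∀ t, HasDerivAt b (rhsB α (b t) (c t) (p t)) t)
    (hc : ∀ t, HasDerivAt c (rhsC (b t) (c t) (p t)) t)
    (hp : ∀ t, HasDerivAt p (rhsP (b t) (c t) (p t)) t) :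
    ∀ t, HasDerivAt (fun τ => ‖c τ‖)
      (2 * ‖c t‖ / (1 - ‖p t‖ ^ 2) * (b t * p t * (starRingEnd ℂ) (c t)).im) t := by
  intro t
  set d := rhsC (b t) (c t) (p t) with hd
  have hre : HasDerivAt (fun τ => (c τ).re) d.re t :=
    Complex.reCLM.hasFDerivAt.comp_hasDerivAt t (hc t)
  have him : HasDerivAt (fun τ => (c τ).im) d.im t :=
    Complex.imCLM.hasFDerivAt.comp_hasDerivAt t (hc t)
  have hf : HasDerivAt (fun τ => (c τ).re ^ 2 + (c τ).im ^ 2)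
      (2 * (c t).re ^ 1 * d.re + 2 * (c t).im ^ 1 * d.im) t := (hre.pow 2).add (him.pow 2)
  have hpos : 0 < (c t).re ^ 2 + (c t).im ^ 2 := by
    have h := Complex.normSq_pos.mpr (hc0 t)
    rw [Complex.normSq_apply] at h; nlinarith [h]
  have hs := hf.sqrt (ne_of_gt hpos)
  have heq : (fun τ => Real.sqrt ((c τ).re ^ 2 + (c τ).im ^ 2)) = fun τ => ‖c τ‖ := by
    funext τ
    rw [Complex.norm_def, Complex.normSq_apply]
    ring_nf
  rw [heq] at hs
  have hsq : Real.sqrt ((c t).re ^ 2 + (c t).im ^ 2) = ‖c t‖ := by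
    rw [Complex.norm_def, Complex.normSq_apply]
    ring_nf
  have hcn : ‖c t‖ ≠ 0 := norm_ne_zero_iff.mpr (hc0 t)
  have hr : (1 - ‖p t‖ ^ 2 : ℝ) ≠ 0 := by nlinarith [norm_nonneg (p t), hp1 t]
  have key : (c t).re * d.re + (c t).im * d.im
      = 2 * ‖c t‖ ^ 2 / (1 - ‖p t‖ ^ 2) * (b t * p t * (starRingEnd ℂ) (c t)).im := by
    simp only [hd, rhsC, ← Complex.ofReal_pow, Complex.div_ofReal_re, Complex.div_ofReal_im,
      Complex.mul_re, Complex.mul_im, Complex.ofReal_re, Complex.ofReal_im, Complex.neg_re,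
      Complex.neg_im, Complex.I_re, Complex.I_im, Complex.add_re, Complex.add_im,
      Complex.conj_re, Complex.conj_im, Complex.re_ofNat, Complex.im_ofNat]
    field_simp
    ring
  convert hs using 1
  rw [hsq, pow_one, pow_one,
    show 2 * (c t).re * d.re + 2 * (c t).im * d.im
      = 2 * ((c t).re * d.re + (c t).im * d.im) from by ring, key]
  generalize (b t * p t * (starRingEnd ℂ) (c t)).im = I0
  generalize hX : (‖c t‖ : ℝ) = X at hcn ⊢
  generalize hR : (1 - ‖p t‖ ^ 2 : ℝ) = r at hr ⊢
  field_simp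
end

section
/- Along solutions of the ODE system i b' = |b|^2 b + 2b|c|^2/(1-|p|^2) + |c|^2 c conj(p)/(1-|p|^2)^2 + αb, i c' = 2|b|^2 c + 2b|c|^2 p/(1-|p|^2) + |c|^2 c/(1-|p|^2)^2, i p' = c conj(b) + |c|^2 p/(1-|p|^2), the quantities Q = |b|^2 + |c|^2/(1-|p|^2) and M = |c|^2/(1-|p|^2)^2 are conserved (have zero time derivative). -/
private lemma myhd {f : ℝ → ℂ} {f' : ℂ} {t : ℝ} (hf : HasDerivAt f f' t) :
    HasDerivAt (fun τ => ‖f τ‖ ^ 2) (2 * (f' * (starRingEnd ℂ) (f t)).re) t := by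
  have h1 : HasDerivAt (fun τ => f τ * (starRingEnd ℂ) (f τ))
      (f' * (starRingEnd ℂ) (f t) + f t * (starRingEnd ℂ) f') t := hf.mul hf.star
  have h2 := Complex.reCLM.hasFDerivAt.comp_hasDerivAt t h1
  have h3 : (fun τ => Complex.reCLM (f τ * (starRingEnd ℂ) (f τ))) = fun τ => ‖f τ‖ ^ 2 := by
    funext τ
    simp [Complex.mul_conj, Complex.normSq_eq_norm_sq, ← Complex.ofReal_pow]
  rw [Function.comp_def, h3] at h2
  refine h2.congr_deriv ?_
  have : (f t * (starRingEnd ℂ) f').re = (f' * (starRingEnd ℂ) (f t)).re := by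
    rw [← Complex.conj_conj (f t * (starRingEnd ℂ) f'), Complex.conj_re]
    simp [mul_comm]
  rw [Complex.reCLM_apply, Complex.add_re, this]; ring

private lemma mynormsq (z : ℂ) : ‖z‖ ^ 2 = z.re ^ 2 + z.im ^ 2 := by
  rw [Complex.sq_norm, Complex.normSq_apply]; ring

private lemma key1 (α : ℝ) (B C P : ℂ) (hd : (1:ℝ) - ‖P‖ ^ 2 ≠ 0) :
    2 * (rhsB α B C P * (starRingEnd ℂ) B).re
      + (2 * (rhsC B C P * (starRingEnd ℂ) C).re * (1 - ‖P‖ ^ 2)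
        - ‖C‖ ^ 2 * (0 - 2 * (rhsP B C P * (starRingEnd ℂ) P).re)) / (1 - ‖P‖ ^ 2) ^ 2 = 0 := by
  simp only [rhsB, rhsC, rhsP, mynormsq] at *
  simp only [Complex.mul_re, Complex.mul_im, Complex.add_re, Complex.add_im, Complex.div_re,
    Complex.div_im, Complex.normSq_apply, Complex.ofReal_re, Complex.ofReal_im, Complex.I_re,
    Complex.I_im, Complex.neg_re, Complex.neg_im, Complex.conj_re, Complex.conj_im,
    Complex.re_ofNat, Complex.im_ofNat, Complex.sub_re, Complex.sub_im, Complex.one_re,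
    Complex.one_im, pow_two]
  have h3 : 1 - (P.re * P.re + P.im * P.im) ≠ 0 := by intro h; apply hd; nlinarith [h]
  field_simp
  ring

private lemma key2 (B C P : ℂ) (hd : (1:ℝ) - ‖P‖ ^ 2 ≠ 0) :
    (2 * (rhsC B C P * (starRingEnd ℂ) C).re * ((1 - ‖P‖ ^ 2) ^ 2)
        - ‖C‖ ^ 2 * (2 * (1 - ‖P‖ ^ 2) ^ 1 * (0 - 2 * (rhsP B C P * (starRingEnd ℂ) P).re)))
      / ((1 - ‖P‖ ^ 2) ^ 2) ^ 2 = 0 := by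
  simp only [rhsC, rhsP, mynormsq] at *
  simp only [Complex.mul_re, Complex.mul_im, Complex.add_re, Complex.add_im, Complex.div_re,
    Complex.div_im, Complex.normSq_apply, Complex.ofReal_re, Complex.ofReal_im, Complex.I_re,
    Complex.I_im, Complex.neg_re, Complex.neg_im, Complex.conj_re, Complex.conj_im,
    Complex.re_ofNat, Complex.im_ofNat, Complex.sub_re, Complex.sub_im, Complex.one_re,
    Complex.one_im, pow_one, pow_two]
  have h3 : 1 - (P.re * P.re + P.im * P.im) ≠ 0 := by intro h; apply hd; nlinarith [h]
  field_simp
  ring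

/-- Along `C¹` solutions of the ODE system of the α-Szegő equation on
`u = b + cz/(1-pz)`, the mass `Q = |b|² + |c|²/(1-|p|²)` and the momentum
`M = |c|²/(1-|p|²)²` are conserved (their time derivatives vanish). -/
theorem stmt11 (α : ℝ) (b c p : ℝ → ℂ)
    (hp1 : ∀ t, ‖p t‖ < 1)
    (hb : ∀ t, HasDerivAt b (rhsB α (b t) (c t) (p t)) t)
    (hc : ∀ t, HasDerivAt c (rhsC (b t) (c t) (p t)) t)
    (hp : ∀ t, HasDerivAt p (rhsP (b t) (c t) (p t)) t) :
    ∀ t, HasDerivAt (fun τ => ‖b τ‖ ^ 2 + ‖c τ‖ ^ 2 / (1 - ‖p τ‖ ^ 2)) 0 t ∧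
      HasDerivAt (fun τ => ‖c τ‖ ^ 2 / (1 - ‖p τ‖ ^ 2) ^ 2) 0 t := by
  intro t
  have hdpos : (0:ℝ) < 1 - ‖p t‖ ^ 2 := by
    have := hp1 t
    nlinarith [norm_nonneg (p t)]
  have hdne : (1:ℝ) - ‖p t‖ ^ 2 ≠ 0 := ne_of_gt hdpos
  have hNb := myhd (hb t)
  have hNc := myhd (hc t)
  have hNp := myhd (hp t)
  have hD : HasDerivAt (fun τ => 1 - ‖p τ‖ ^ 2)
      (0 - 2 * (rhsP (b t) (c t) (p t) * (starRingEnd ℂ) (p t)).re) t :=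
    (hasDerivAt_const t (1:ℝ)).sub hNp
  constructor
  · have h := hNb.add (hNc.div hD hdne)
    rw [key1 α (b t) (c t) (p t) hdne] at h
    exact h
  · have hD2 : HasDerivAt (fun τ => (1 - ‖p τ‖ ^ 2) ^ 2)
        (2 * (1 - ‖p t‖ ^ 2) ^ 1 * (0 - 2 * (rhsP (b t) (c t) (p t) * (starRingEnd ℂ) (p t)).re))
        t := by
      simpa using hD.fun_pow 2
    have hD2ne : ((1:ℝ) - ‖p t‖ ^ 2) ^ 2 ≠ 0 := pow_ne_zero 2 hdne
    have h := hNc.div hD2 hD2ne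
    rw [key2 (b t) (c t) (p t) hdne] at h
    exact h
end

section
/- Suppose b, c, p ∈ ℂ with |p| < 1, c ≠ 0, satisfy |b + conj(p)c/(1-|p|^2)| = √α with α > 0. Set Q = |b|^2 + |c|^2/(1-|p|^2) and M = |c|^2/(1-|p|^2)^2. Then 4(Im(b p conj(c)))^2/(1-|p|^2)^2 = 4QM - 4α√M |c| - (α - Q - M)^2. -/
lemma key_real (P B C X Y α : ℝ) (hd : 0 < 1 - P ^ 2)
    (hXY : X ^ 2 + Y ^ 2 = B ^ 2 * P ^ 2 * C ^ 2)
    (ha : α = B ^ 2 + P ^ 2 * C ^ 2 / (1 - P ^ 2) ^ 2 + 2 * X / (1 - P ^ 2)) :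
    4 * Y ^ 2 / (1 - P ^ 2) ^ 2
      = 4 * (B ^ 2 + C ^ 2 / (1 - P ^ 2)) * (C ^ 2 / (1 - P ^ 2) ^ 2)
        - 4 * α * (C / (1 - P ^ 2)) * C
        - (α - (B ^ 2 + C ^ 2 / (1 - P ^ 2)) - C ^ 2 / (1 - P ^ 2) ^ 2) ^ 2 := by
  have hd0 : (1 - P ^ 2) ≠ 0 := ne_of_gt hd
  subst ha
  field_simp
  linear_combination 4 * (1 - P ^ 2) ^ 2 * hXY

/-- Key algebraic identity: if `b, c, p ∈ ℂ`, `|p| < 1`, `c ≠ 0` satisfy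
`|b + p̄ c/(1-|p|²)| = √α` with `α > 0`, and `Q = |b|² + |c|²/(1-|p|²)`,
`M = |c|²/(1-|p|²)²`, then
`4(Im(b p c̄))²/(1-|p|²)² = 4QM - 4α√M |c| - (α - Q - M)²`. -/
theorem stmt12 (α : ℝ) (hα : 0 < α) (b c p : ℂ) (hp : ‖p‖ < 1) (hc : c ≠ 0)
    (h : ‖b + (starRingEnd ℂ) p * c / (((1 - ‖p‖ ^ 2 : ℝ)) : ℂ)‖ = Real.sqrt α) :
    4 * (b * p * (starRingEnd ℂ) c).im ^ 2 / (1 - ‖p‖ ^ 2) ^ 2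
      = 4 * (‖b‖ ^ 2 + ‖c‖ ^ 2 / (1 - ‖p‖ ^ 2)) * (‖c‖ ^ 2 / (1 - ‖p‖ ^ 2) ^ 2)
        - 4 * α * Real.sqrt (‖c‖ ^ 2 / (1 - ‖p‖ ^ 2) ^ 2) * ‖c‖
        - (α - (‖b‖ ^ 2 + ‖c‖ ^ 2 / (1 - ‖p‖ ^ 2)) - ‖c‖ ^ 2 / (1 - ‖p‖ ^ 2) ^ 2) ^ 2 := by
  have hd : (0 : ℝ) < 1 - ‖p‖ ^ 2 := by nlinarith [norm_nonneg p]
  have hd0 : (1 - ‖p‖ ^ 2) ≠ 0 := ne_of_gt hd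
  set X : ℝ := (b * p * (starRingEnd ℂ) c).re with hXdef
  set Y : ℝ := (b * p * (starRingEnd ℂ) c).im with hYdef
  have hsqrt : Real.sqrt (‖c‖ ^ 2 / (1 - ‖p‖ ^ 2) ^ 2) = ‖c‖ / (1 - ‖p‖ ^ 2) := by
    rw [← div_pow, Real.sqrt_sq (by positivity)]
  -- X² + Y² = ‖b‖²‖p‖²‖c‖²
  have hXY : X ^ 2 + Y ^ 2 = ‖b‖ ^ 2 * ‖p‖ ^ 2 * ‖c‖ ^ 2 := by
    have h1 : Complex.normSq (b * p * (starRingEnd ℂ) c)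
        = Complex.normSq b * Complex.normSq p * Complex.normSq c := by
      simp [Complex.normSq_mul]
    rw [Complex.normSq_apply] at h1
    simp only [← Complex.sq_norm] at h1
    rw [hXdef, hYdef]; nlinarith [h1]
  -- α in terms of X
  have hα2 : α = ‖b‖ ^ 2 + ‖p‖ ^ 2 * ‖c‖ ^ 2 / (1 - ‖p‖ ^ 2) ^ 2
      + 2 * X / (1 - ‖p‖ ^ 2) := by
    have h2 : ‖b + (starRingEnd ℂ) p * c / (((1 - ‖p‖ ^ 2 : ℝ)) : ℂ)‖ ^ 2 = α := by
      rw [h, Real.sq_sqrt hα.le]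
    have h3 : ∀ z : ℂ, ‖z‖ ^ 2 = Complex.normSq z := fun z => by
      rw [Complex.sq_norm]
    rw [h3] at h2
    rw [Complex.normSq_add] at h2
    have hw : Complex.normSq ((starRingEnd ℂ) p * c / (((1 - ‖p‖ ^ 2 : ℝ)) : ℂ))
        = ‖p‖ ^ 2 * ‖c‖ ^ 2 / (1 - ‖p‖ ^ 2) ^ 2 := by
      rw [Complex.normSq_div, Complex.normSq_mul, Complex.normSq_conj]
      simp only [← Complex.sq_norm, Complex.norm_real,
        Real.norm_eq_abs]
      rw [abs_of_pos hd]
    have hre : (b * (starRingEnd ℂ) ((starRingEnd ℂ) p * c / (((1 - ‖p‖ ^ 2 : ℝ)) : ℂ))).re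
        = X / (1 - ‖p‖ ^ 2) := by
      simp only [map_div₀, map_mul, Complex.conj_conj, Complex.conj_ofReal]
      rw [hXdef]
      rw [show b * (p * (starRingEnd ℂ) c / (((1 - ‖p‖ ^ 2 : ℝ)) : ℂ))
        = (b * p * (starRingEnd ℂ) c) / (((1 - ‖p‖ ^ 2 : ℝ)) : ℂ) by ring]
      rw [Complex.div_ofReal_re]
    rw [hw, hre, ← h3] at h2
    rw [← h2]; ring
  rw [hsqrt]
  exact key_real ‖p‖ ‖b‖ ‖c‖ X Y α hd hXY hα2
end

section
/- Let u(z) = b + cz/(1-pz) with |p| < 1, c ≠ 0, and s > 1/2. Then there exist constants A_s, B_s > 0 depending only on s such that, whenever |p| ≥ 1/2, A_s |c|^2/(1-|p|^2)^{2s+1} ≤ ||u - b||_{H^s}^2 ≤ B_s |c|^2/(1-|p|^2)^{2s+1}, where ||v||_{H^s}^2 = Σ_{k≥0}(1+k^2)^s |v̂(k)|^2. -/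
open Real

private lemma pow_le_desc' (n k : ℕ) : (k + 1) ^ n ≤ (k + n).descFactorial n := by
  have h := Nat.pow_sub_le_descFactorial (k + n) n
  have : k + n + 1 - n = k + 1 := by omega
  rwa [this] at h

private lemma pow_le_fact_choose (n k : ℕ) :
    ((k : ℝ) + 1) ^ n ≤ (n.factorial : ℝ) * ((k + n).choose n : ℝ) := by
  have h := pow_le_desc' n k
  rw [Nat.descFactorial_eq_factorial_mul_choose] at h
  have := (Nat.cast_le (α := ℝ)).2 h
  push_cast at this
  linarith [this]

private lemma fact_choose_le_pow (n k : ℕ) (hn : 1 ≤ n) :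
    (n.factorial : ℝ) * ((k + n).choose n : ℝ) ≤ (n : ℝ) ^ n * ((k : ℝ) + 1) ^ n := by
  have h1 : (k + n).descFactorial n ≤ (n * (k + 1)) ^ n := by
    calc (k + n).descFactorial n ≤ (k + n) ^ n := Nat.descFactorial_le_pow _ _
    _ ≤ (n * (k + 1)) ^ n := Nat.pow_le_pow_left (by nlinarith) _
  have h2 : (n.factorial : ℝ) * ((k + n).choose n : ℝ) = ((k + n).descFactorial n : ℝ) := by
    rw [Nat.descFactorial_eq_factorial_mul_choose]; push_cast; ring
  rw [h2]
  have := (Nat.cast_le (α := ℝ)).2 h1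
  push_cast at this
  calc ((k + n).descFactorial n : ℝ) ≤ ((n : ℝ) * ((k : ℝ) + 1)) ^ n := this
  _ = (n : ℝ) ^ n * ((k : ℝ) + 1) ^ n := mul_pow _ _ _

private lemma hasSum_choose' (n : ℕ) {x : ℝ} (hx0 : 0 ≤ x) (hx1 : x < 1) :
    HasSum (fun k : ℕ => ((k + n).choose n : ℝ) * x ^ k) (1 / (1 - x) ^ (n + 1)) := by
  have hx : ‖x‖ < 1 := by rw [Real.norm_eq_abs, abs_of_nonneg hx0]; exact hx1
  exact hasSum_choose_mul_geometric_of_norm_lt_one n hx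

private lemma summable_pow_aux (n : ℕ) {x : ℝ} (hx0 : 0 ≤ x) (hx1 : x < 1) :
    Summable (fun k : ℕ => ((k : ℝ) + 1) ^ n * x ^ k) := by
  refine Summable.of_nonneg_of_le (fun k => by positivity) (fun k => ?_)
    (((hasSum_choose' n hx0 hx1).summable).mul_left (n.factorial : ℝ))
  rw [← mul_assoc]
  exact mul_le_mul_of_nonneg_right (pow_le_fact_choose n k) (by positivity)

private lemma tsum_pow_le (n : ℕ) {x : ℝ} (hx0 : 0 ≤ x) (hx1 : x < 1) :
    ∑' k : ℕ, ((k : ℝ) + 1) ^ n * x ^ k ≤ (n.factorial : ℝ) / (1 - x) ^ (n + 1) := by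
  have h := (hasSum_choose' n hx0 hx1).summable.mul_left (n.factorial : ℝ)
  have hb : ∀ k : ℕ, ((k : ℝ) + 1) ^ n * x ^ k
      ≤ (n.factorial : ℝ) * (((k + n).choose n : ℝ) * x ^ k) := by
    intro k
    rw [← mul_assoc]
    exact mul_le_mul_of_nonneg_right (pow_le_fact_choose n k) (by positivity)
  have := Summable.tsum_le_tsum hb (summable_pow_aux n hx0 hx1) h
  calc ∑' k : ℕ, ((k : ℝ) + 1) ^ n * x ^ k
      ≤ ∑' k : ℕ, (n.factorial : ℝ) * (((k + n).choose n : ℝ) * x ^ k) := this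
    _ = (n.factorial : ℝ) * (1 / (1 - x) ^ (n + 1)) := by
        rw [tsum_mul_left, (hasSum_choose' n hx0 hx1).tsum_eq]
    _ = (n.factorial : ℝ) / (1 - x) ^ (n + 1) := by ring

private lemma le_tsum_pow (n : ℕ) (hn : 1 ≤ n) {x : ℝ} (hx0 : 0 ≤ x) (hx1 : x < 1) :
    (n.factorial : ℝ) / ((n : ℝ) ^ n * (1 - x) ^ (n + 1))
      ≤ ∑' k : ℕ, ((k : ℝ) + 1) ^ n * x ^ k := by
  have hnn : (0 : ℝ) < (n : ℝ) ^ n := by positivity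
  have hfac : (0 : ℝ) < (n.factorial : ℝ) := by positivity
  have key : ∀ k : ℕ, (n.factorial : ℝ) / (n : ℝ) ^ n * (((k + n).choose n : ℝ) * x ^ k)
      ≤ ((k : ℝ) + 1) ^ n * x ^ k := by
    intro k
    rw [div_mul_eq_mul_div, ← mul_assoc, div_le_iff₀ hnn]
    calc (n.factorial : ℝ) * ((k + n).choose n : ℝ) * x ^ k
        ≤ ((n : ℝ) ^ n * ((k : ℝ) + 1) ^ n) * x ^ k :=
          mul_le_mul_of_nonneg_right (fact_choose_le_pow n k hn) (by positivity)
      _ = ((k : ℝ) + 1) ^ n * x ^ k * (n : ℝ) ^ n := by ring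
  have h := Summable.tsum_le_tsum key
    (((hasSum_choose' n hx0 hx1).summable).mul_left _) (summable_pow_aux n hx0 hx1)
  calc (n.factorial : ℝ) / ((n : ℝ) ^ n * (1 - x) ^ (n + 1))
      = (n.factorial : ℝ) / (n : ℝ) ^ n * (1 / (1 - x) ^ (n + 1)) := by
        rw [div_mul_eq_div_mul_one_div]
    _ = ∑' k : ℕ, (n.factorial : ℝ) / (n : ℝ) ^ n * (((k + n).choose n : ℝ) * x ^ k) := by
        rw [tsum_mul_left, (hasSum_choose' n hx0 hx1).tsum_eq]
    _ ≤ _ := h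

private lemma summable_rpow_aux (α : ℝ) {x : ℝ} (hx0 : 0 ≤ x) (hx1 : x < 1) :
    Summable (fun k : ℕ => ((k : ℝ) + 1) ^ α * x ^ k) := by
  refine Summable.of_nonneg_of_le (fun k => by positivity) (fun k => ?_)
    (summable_pow_aux ⌈α⌉₊ hx0 hx1)
  apply mul_le_mul_of_nonneg_right _ (by positivity)
  rw [← Real.rpow_natCast ((k : ℝ) + 1) ⌈α⌉₊]
  exact Real.rpow_le_rpow_of_exponent_le (by exact_mod_cast Nat.le_add_left 1 k)
    (Nat.le_ceil α)

private lemma tsum_rpow_le (α : ℝ) (hα : 0 ≤ α) {x : ℝ} (hx0 : 0 < x) (hx1 : x < 1) :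
    ∑' k : ℕ, ((k : ℝ) + 1) ^ α * x ^ k
      ≤ ((⌊α⌋₊ + 1).factorial : ℝ) / (1 - x) ^ (α + 1) := by
  set n := ⌊α⌋₊ with hn
  have hD : 0 < 1 - x := by linarith
  have hnα : (n : ℝ) ≤ α := Nat.floor_le hα
  have hαn : α < (n : ℝ) + 1 := Nat.lt_floor_add_one α
  rcases eq_or_lt_of_le hnα with he | hlt
  · have e2 : (1 - x) ^ (α + 1) = (1 - x) ^ (n + 1 : ℕ) := by
      rw [← he, show (n : ℝ) + 1 = ((n + 1 : ℕ) : ℝ) by push_cast; ring, Real.rpow_natCast]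
    calc ∑' k : ℕ, ((k : ℝ) + 1) ^ α * x ^ k
        = ∑' k : ℕ, ((k : ℝ) + 1) ^ (n : ℕ) * x ^ k := by
          congr 1; funext k; rw [← he, Real.rpow_natCast]
      _ ≤ (n.factorial : ℝ) / (1 - x) ^ (n + 1 : ℕ) := tsum_pow_le n hx0.le hx1
      _ ≤ ((n + 1).factorial : ℝ) / (1 - x) ^ (n + 1 : ℕ) := by
          apply div_le_div_of_nonneg_right ?_ (by positivity)
          exact_mod_cast Nat.factorial_le (Nat.le_succ n)
      _ = ((n + 1).factorial : ℝ) / (1 - x) ^ (α + 1) := by rw [e2]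
  · set θ := (n : ℝ) + 1 - α with hθ
    have hθ0 : (0 : ℝ) < θ := by rw [hθ]; linarith
    have hθ1 : θ < 1 := by rw [hθ]; linarith
    have hθ1' : (0 : ℝ) < 1 - θ := by linarith
    have hpq : (1 / θ).HolderConjugate (1 / (1 - θ)) := by
      constructor
      · simp only [one_div, inv_inv, inv_one]; ring
      · positivity
      · positivity
    set f : ℕ → ℝ := fun k => (((k : ℝ) + 1) ^ (n : ℕ) * x ^ k) ^ θ with hfdef
    set g : ℕ → ℝ := fun k => (((k : ℝ) + 1) ^ (n + 1 : ℕ) * x ^ k) ^ (1 - θ) with hgdef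
    have hfnn : ∀ k, 0 ≤ f k := fun k => Real.rpow_nonneg (by positivity) _
    have hgnn : ∀ k, 0 ≤ g k := fun k => Real.rpow_nonneg (by positivity) _
    have hfp : (fun k => f k ^ (1 / θ)) = fun k : ℕ => ((k : ℝ) + 1) ^ (n : ℕ) * x ^ k := by
      funext k
      rw [hfdef, ← Real.rpow_mul (by positivity), mul_one_div_cancel (ne_of_gt hθ0),
        Real.rpow_one]
    have hgq : (fun k => g k ^ (1 / (1 - θ)))
        = fun k : ℕ => ((k : ℝ) + 1) ^ (n + 1 : ℕ) * x ^ k := by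
      funext k
      rw [hgdef, ← Real.rpow_mul (by positivity), mul_one_div_cancel (ne_of_gt hθ1'),
        Real.rpow_one]
    have hf_sum : Summable fun k => f k ^ (1 / θ) := by
      rw [hfp]; exact summable_pow_aux n hx0.le hx1
    have hg_sum : Summable fun k => g k ^ (1 / (1 - θ)) := by
      rw [hgq]; exact summable_pow_aux (n + 1) hx0.le hx1
    have H := inner_le_Lp_mul_Lq_tsum_of_nonneg hpq hfnn hgnn hf_sum hg_sum
    rw [hfp, hgq, one_div_one_div, one_div_one_div] at H
    have hfg : ∀ k : ℕ, f k * g k = ((k : ℝ) + 1) ^ α * x ^ k := by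
      intro k
      have hu : (0 : ℝ) < (k : ℝ) + 1 := by positivity
      simp only [hfdef, hgdef]
      rw [show (((k : ℝ) + 1) ^ (n : ℕ) * x ^ k : ℝ)
            = ((k : ℝ) + 1) ^ ((n : ℕ) : ℝ) * x ^ ((k : ℕ) : ℝ) by
          rw [Real.rpow_natCast, Real.rpow_natCast],
        show (((k : ℝ) + 1) ^ (n + 1 : ℕ) * x ^ k : ℝ)
            = ((k : ℝ) + 1) ^ ((n + 1 : ℕ) : ℝ) * x ^ ((k : ℕ) : ℝ) by
          rw [Real.rpow_natCast, Real.rpow_natCast]]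
      rw [Real.mul_rpow (Real.rpow_nonneg hu.le _) (Real.rpow_nonneg hx0.le _),
        Real.mul_rpow (Real.rpow_nonneg hu.le _) (Real.rpow_nonneg hx0.le _),
        ← Real.rpow_mul hu.le, ← Real.rpow_mul hx0.le,
        ← Real.rpow_mul hu.le, ← Real.rpow_mul hx0.le]
      rw [mul_mul_mul_comm, ← Real.rpow_add hu, ← Real.rpow_add hx0]
      rw [show ((n : ℕ) : ℝ) * θ + ((n + 1 : ℕ) : ℝ) * (1 - θ) = α by push_cast; rw [hθ]; ring,
        show ((k : ℕ) : ℝ) * θ + ((k : ℕ) : ℝ) * (1 - θ) = ((k : ℕ) : ℝ) by ring,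
        Real.rpow_natCast]
    have key2 : ((n.factorial : ℝ) / (1 - x) ^ (n + 1 : ℕ)) ^ θ
        * (((n + 1).factorial : ℝ) / (1 - x) ^ (n + 2 : ℕ)) ^ (1 - θ)
        ≤ ((n + 1).factorial : ℝ) / (1 - x) ^ (α + 1) := by
      have hG : (0 : ℝ) < ((n + 1).factorial : ℝ) := by positivity
      rw [Real.div_rpow (by positivity) (by positivity),
        Real.div_rpow (by positivity) (by positivity), div_mul_div_comm]
      apply div_le_div₀ hG.le ?_ (Real.rpow_pos_of_pos hD _) ?_
      · calc (n.factorial : ℝ) ^ θ * ((n + 1).factorial : ℝ) ^ (1 - θ)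
            ≤ ((n + 1).factorial : ℝ) ^ θ * ((n + 1).factorial : ℝ) ^ (1 - θ) := by
              apply mul_le_mul_of_nonneg_right _ (Real.rpow_nonneg hG.le _)
              exact Real.rpow_le_rpow (by positivity)
                (by exact_mod_cast Nat.factorial_le (Nat.le_succ n)) hθ0.le
          _ = ((n + 1).factorial : ℝ) := by
              rw [← Real.rpow_add hG, show θ + (1 - θ) = 1 by ring, Real.rpow_one]
      · rw [← Real.rpow_natCast (1 - x) (n + 1), ← Real.rpow_natCast (1 - x) (n + 2),
          ← Real.rpow_mul hD.le, ← Real.rpow_mul hD.le, ← Real.rpow_add hD,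
          show ((n + 1 : ℕ) : ℝ) * θ + ((n + 2 : ℕ) : ℝ) * (1 - θ) = α + 1 by
            push_cast; rw [hθ]; ring]
    calc ∑' k : ℕ, ((k : ℝ) + 1) ^ α * x ^ k = ∑' k, f k * g k := by
          congr 1; funext k; rw [hfg]
      _ ≤ (∑' k : ℕ, ((k : ℝ) + 1) ^ (n : ℕ) * x ^ k) ^ θ
            * (∑' k : ℕ, ((k : ℝ) + 1) ^ (n + 1 : ℕ) * x ^ k) ^ (1 - θ) := H
      _ ≤ ((n.factorial : ℝ) / (1 - x) ^ (n + 1 : ℕ)) ^ θ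
            * (((n + 1).factorial : ℝ) / (1 - x) ^ (n + 2 : ℕ)) ^ (1 - θ) := by
          apply mul_le_mul
          · exact Real.rpow_le_rpow (tsum_nonneg fun k => by positivity)
              (tsum_pow_le n hx0.le hx1) hθ0.le
          · exact Real.rpow_le_rpow (tsum_nonneg fun k => by positivity)
              (by simpa using tsum_pow_le (n + 1) hx0.le hx1) hθ1'.le
          · exact Real.rpow_nonneg (tsum_nonneg fun k => by positivity) _
          · exact Real.rpow_nonneg (by positivity) _
      _ ≤ ((n + 1).factorial : ℝ) / (1 - x) ^ (α + 1) := key2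

private lemma le_tsum_rpow (α : ℝ) (hα : 0 < α) {x : ℝ} (hx0 : 0 < x) (hx1 : x < 1) :
    ((⌈α⌉₊.factorial : ℝ) / (⌈α⌉₊ : ℝ) ^ (⌈α⌉₊ : ℕ)) ^ 2
        / ((⌊2 * (⌈α⌉₊ : ℝ) - α⌋₊ + 1).factorial : ℝ) / (1 - x) ^ (α + 1)
      ≤ ∑' k : ℕ, ((k : ℝ) + 1) ^ α * x ^ k := by
  set n := ⌈α⌉₊ with hn
  have hn1 : 1 ≤ n := Nat.one_le_iff_ne_zero.2 (by
    simp only [hn]; exact Nat.ceil_pos.2 hα |>.ne')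
  set β := 2 * (n : ℝ) - α with hβ
  have hαn : α ≤ (n : ℝ) := Nat.le_ceil α
  have hβ0 : 0 ≤ β := by rw [hβ]; linarith
  have hD : 0 < 1 - x := by linarith
  -- Cauchy–Schwarz
  have hpq : (2 : ℝ).HolderConjugate 2 := ⟨by norm_num, by norm_num, by norm_num⟩
  set f : ℕ → ℝ := fun k => (((k : ℝ) + 1) ^ α * x ^ k) ^ ((1 : ℝ) / 2) with hfdef
  set g : ℕ → ℝ := fun k => (((k : ℝ) + 1) ^ β * x ^ k) ^ ((1 : ℝ) / 2) with hgdef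
  have hfnn : ∀ k, 0 ≤ f k := fun k => Real.rpow_nonneg (by positivity) _
  have hgnn : ∀ k, 0 ≤ g k := fun k => Real.rpow_nonneg (by positivity) _
  have hfp : (fun k => f k ^ (2 : ℝ)) = fun k : ℕ => ((k : ℝ) + 1) ^ α * x ^ k := by
    funext k
    rw [hfdef, ← Real.rpow_mul (by positivity), show (1 : ℝ) / 2 * 2 = 1 by norm_num,
      Real.rpow_one]
  have hgq : (fun k => g k ^ (2 : ℝ)) = fun k : ℕ => ((k : ℝ) + 1) ^ β * x ^ k := by
    funext k
    rw [hgdef, ← Real.rpow_mul (by positivity), show (1 : ℝ) / 2 * 2 = 1 by norm_num,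
      Real.rpow_one]
  have hf_sum : Summable fun k => f k ^ (2 : ℝ) := by
    rw [hfp]; exact summable_rpow_aux α hx0.le hx1
  have hg_sum : Summable fun k => g k ^ (2 : ℝ) := by
    rw [hgq]; exact summable_rpow_aux β hx0.le hx1
  have H := inner_le_Lp_mul_Lq_tsum_of_nonneg hpq hfnn hgnn hf_sum hg_sum
  rw [hfp, hgq] at H
  have hfg : ∀ k : ℕ, f k * g k = ((k : ℝ) + 1) ^ (n : ℕ) * x ^ k := by
    intro k
    have hu : (0 : ℝ) < (k : ℝ) + 1 := by positivity
    simp only [hfdef, hgdef]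
    rw [show (x ^ k : ℝ) = x ^ ((k : ℕ) : ℝ) from (Real.rpow_natCast x k).symm]
    rw [Real.mul_rpow (Real.rpow_nonneg hu.le _) (Real.rpow_nonneg hx0.le _),
      Real.mul_rpow (Real.rpow_nonneg hu.le _) (Real.rpow_nonneg hx0.le _),
      ← Real.rpow_mul hu.le, ← Real.rpow_mul hx0.le, ← Real.rpow_mul hu.le]
    rw [mul_mul_mul_comm, ← Real.rpow_add hu, ← Real.rpow_add hx0]
    rw [show α * ((1 : ℝ) / 2) + β * ((1 : ℝ) / 2) = ((n : ℕ) : ℝ) by rw [hβ]; ring,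
      show ((k : ℕ) : ℝ) * ((1 : ℝ) / 2) + ((k : ℕ) : ℝ) * ((1 : ℝ) / 2) = ((k : ℕ) : ℝ) by ring,
      Real.rpow_natCast, Real.rpow_natCast]
  set Sα := ∑' k : ℕ, ((k : ℝ) + 1) ^ α * x ^ k with hSα
  set Sβ := ∑' k : ℕ, ((k : ℝ) + 1) ^ β * x ^ k with hSβ
  set Sn := ∑' k : ℕ, ((k : ℝ) + 1) ^ (n : ℕ) * x ^ k with hSn
  have hSα0 : 0 ≤ Sα := tsum_nonneg fun k => by positivity
  have hSβ0 : 0 ≤ Sβ := tsum_nonneg fun k => by positivity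
  have hSn0 : 0 ≤ Sn := tsum_nonneg fun k => by positivity
  have hSnle : Sn ≤ Sα ^ ((1 : ℝ) / 2) * Sβ ^ ((1 : ℝ) / 2) := by
    calc Sn = ∑' k, f k * g k := by rw [hSn]; congr 1; funext k; rw [hfg]
      _ ≤ Sα ^ ((1 : ℝ) / 2) * Sβ ^ ((1 : ℝ) / 2) := by
          convert H using 2 <;> norm_num
  have hsq : Sn ^ 2 ≤ Sα * Sβ := by
    calc Sn ^ 2 ≤ (Sα ^ ((1 : ℝ) / 2) * Sβ ^ ((1 : ℝ) / 2)) ^ 2 :=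
          pow_le_pow_left₀ hSn0 hSnle 2
      _ = Sα * Sβ := by
          rw [mul_pow, ← Real.rpow_natCast (Sα ^ ((1 : ℝ) / 2)) 2,
            ← Real.rpow_natCast (Sβ ^ ((1 : ℝ) / 2)) 2,
            ← Real.rpow_mul hSα0, ← Real.rpow_mul hSβ0]
          norm_num
  have hSβpos : 0 < Sβ := by
    have h0 : (1 : ℝ) ≤ Sβ := by
      have := Summable.le_tsum (summable_rpow_aux β hx0.le hx1) 0 (fun j _ => by positivity)
      simpa using this
    linarith
  have hmain : Sn ^ 2 / Sβ ≤ Sα := by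
    rw [div_le_iff₀ hSβpos]; exact hsq
  have hSnlow : (n.factorial : ℝ) / ((n : ℝ) ^ (n : ℕ) * (1 - x) ^ (n + 1 : ℕ)) ≤ Sn :=
    le_tsum_pow n hn1 hx0.le hx1
  have hSβup : Sβ ≤ ((⌊β⌋₊ + 1).factorial : ℝ) / (1 - x) ^ (β + 1) :=
    tsum_rpow_le β hβ0 hx0 hx1
  have hL0 : 0 < (n.factorial : ℝ) / ((n : ℝ) ^ (n : ℕ) * (1 - x) ^ (n + 1 : ℕ)) := by
    have : (0 : ℝ) < (n : ℝ) := by exact_mod_cast hn1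
    positivity
  have hM0 : 0 < ((⌊β⌋₊ + 1).factorial : ℝ) / (1 - x) ^ (β + 1) := by
    have := Real.rpow_pos_of_pos hD (β + 1)
    positivity
  have step : ((n.factorial : ℝ) / ((n : ℝ) ^ (n : ℕ) * (1 - x) ^ (n + 1 : ℕ))) ^ 2
      / (((⌊β⌋₊ + 1).factorial : ℝ) / (1 - x) ^ (β + 1)) ≤ Sα := by
    refine le_trans ?_ hmain
    apply div_le_div₀ (by positivity) ?_ hSβpos hSβup
    exact pow_le_pow_left₀ hL0.le hSnlow 2
  refine le_trans (le_of_eq ?_) step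
  -- algebraic identity for the constants
  have hnpos : (0 : ℝ) < (n : ℝ) := by exact_mod_cast hn1
  have e1 : ((1 - x) ^ (n + 1 : ℕ) : ℝ) = (1 - x) ^ (((n : ℝ)) + 1) := by
    rw [← Real.rpow_natCast (1 - x) (n + 1)]; push_cast; ring_nf
  rw [e1]
  have hr1 : (0 : ℝ) < (1 - x) ^ ((n : ℝ) + 1) := Real.rpow_pos_of_pos hD _
  have hr2 : (0 : ℝ) < (1 - x) ^ (β + 1) := Real.rpow_pos_of_pos hD _
  have hr3 : (0 : ℝ) < (1 - x) ^ (α + 1) := Real.rpow_pos_of_pos hD _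
  have key2 : (1 - x) ^ (α + 1) * (1 - x) ^ (β + 1) = ((1 - x) ^ ((n : ℝ) + 1)) ^ 2 := by
    rw [← Real.rpow_add hD, ← Real.rpow_natCast ((1 - x) ^ ((n : ℝ) + 1)) 2,
      ← Real.rpow_mul hD.le]
    congr 1
    rw [hβ]; push_cast; ring
  field_simp
  linear_combination (-1 : ℝ) * key2

/-- For `u(z) = b + cz/(1-pz)` with `|p| < 1`, `c ≠ 0`, and `s > 1/2`, there are
constants `A_s, B_s > 0` depending only on `s` such that whenever `|p| ≥ 1/2`,
`A_s |c|²/(1-|p|²)^{2s+1} ≤ ‖u - b‖_{H^s}² ≤ B_s |c|²/(1-|p|²)^{2s+1}`,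
where `‖u - b‖_{H^s}² = ∑_{k ≥ 1} (1+k²)^s |û(k)|² = |c|² ∑_{k ≥ 0} (1+(k+1)²)^s |p|^{2k}`. -/
theorem stmt16 (s : ℝ) (hs : 1 / 2 < s) :
    ∃ A B : ℝ, 0 < A ∧ 0 < B ∧
      ∀ (b c p : ℂ), c ≠ 0 → ‖p‖ < 1 → 1 / 2 ≤ ‖p‖ →
        A * (‖c‖ ^ 2 / (1 - ‖p‖ ^ 2) ^ (2 * s + 1))
            ≤ ∑' k : ℕ, (1 + ((k : ℝ) + 1) ^ 2) ^ s * (‖c‖ ^ 2 * ‖p‖ ^ (2 * k)) ∧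
          ∑' k : ℕ, (1 + ((k : ℝ) + 1) ^ 2) ^ s * (‖c‖ ^ 2 * ‖p‖ ^ (2 * k))
            ≤ B * (‖c‖ ^ 2 / (1 - ‖p‖ ^ 2) ^ (2 * s + 1)) := by
  have hs0 : (0 : ℝ) < s := by linarith
  have h2s : (0 : ℝ) < 2 * s := by linarith
  refine ⟨((⌈2 * s⌉₊.factorial : ℝ) / (⌈2 * s⌉₊ : ℝ) ^ (⌈2 * s⌉₊ : ℕ)) ^ 2
      / ((⌊2 * (⌈2 * s⌉₊ : ℝ) - 2 * s⌋₊ + 1).factorial : ℝ),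
    (2 : ℝ) ^ s * ((⌊2 * s⌋₊ + 1).factorial : ℝ), ?_, ?_, ?_⟩
  · have hcl : (0 : ℝ) < (⌈2 * s⌉₊ : ℝ) := by
      exact_mod_cast Nat.ceil_pos.2 h2s
    have hf1 : (0 : ℝ) < (⌈2 * s⌉₊.factorial : ℝ) := by
      exact_mod_cast Nat.factorial_pos _
    have hf2 : (0 : ℝ) < ((⌊2 * (⌈2 * s⌉₊ : ℝ) - 2 * s⌋₊ + 1).factorial : ℝ) := by
      exact_mod_cast Nat.factorial_pos _
    positivity
  · have hf3 : (0 : ℝ) < ((⌊2 * s⌋₊ + 1).factorial : ℝ) := by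
      exact_mod_cast Nat.factorial_pos _
    positivity
  intro b c p hc hp1 hp2
  set x : ℝ := ‖p‖ ^ 2 with hxdef
  have hx0 : 0 < x := by
    have : (0 : ℝ) < ‖p‖ := by linarith
    positivity
  have hx1 : x < 1 := by
    rw [hxdef]
    calc ‖p‖ ^ 2 ≤ ‖p‖ ^ 1 := pow_le_pow_of_le_one (norm_nonneg p) hp1.le (by norm_num)
      _ = ‖p‖ := pow_one _
      _ < 1 := hp1
  have hD : 0 < 1 - x := by linarith
  have hc2 : (0 : ℝ) ≤ ‖c‖ ^ 2 := by positivity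
  -- rewrite the sum
  have hterm : ∀ k : ℕ, (1 + ((k : ℝ) + 1) ^ 2) ^ s * (‖c‖ ^ 2 * ‖p‖ ^ (2 * k))
      = ‖c‖ ^ 2 * ((1 + ((k : ℝ) + 1) ^ 2) ^ s * x ^ k) := by
    intro k
    rw [hxdef, pow_mul]
    ring
  have htsum : ∑' k : ℕ, (1 + ((k : ℝ) + 1) ^ 2) ^ s * (‖c‖ ^ 2 * ‖p‖ ^ (2 * k))
      = ‖c‖ ^ 2 * ∑' k : ℕ, (1 + ((k : ℝ) + 1) ^ 2) ^ s * x ^ k := by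
    rw [← tsum_mul_left]
    exact tsum_congr hterm
  -- weight comparisons
  have hw1 : ∀ k : ℕ, ((k : ℝ) + 1) ^ (2 * s) ≤ (1 + ((k : ℝ) + 1) ^ 2) ^ s := by
    intro k
    have hu : (0 : ℝ) ≤ (k : ℝ) + 1 := by positivity
    rw [show (2 : ℝ) * s = ((2 : ℕ) : ℝ) * s by norm_num, Real.rpow_mul hu,
      Real.rpow_natCast]
    exact Real.rpow_le_rpow (by positivity) (by linarith [sq_nonneg ((k : ℝ) + 1)]) hs0.le
  have hw2 : ∀ k : ℕ, (1 + ((k : ℝ) + 1) ^ 2) ^ s ≤ 2 ^ s * ((k : ℝ) + 1) ^ (2 * s) := by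
    intro k
    have hu : (0 : ℝ) ≤ (k : ℝ) + 1 := by positivity
    have hu1 : (1 : ℝ) ≤ ((k : ℝ) + 1) ^ 2 := by nlinarith [Nat.cast_nonneg (α := ℝ) k]
    calc (1 + ((k : ℝ) + 1) ^ 2) ^ s ≤ (2 * ((k : ℝ) + 1) ^ 2) ^ s :=
          Real.rpow_le_rpow (by positivity) (by linarith) hs0.le
      _ = 2 ^ s * (((k : ℝ) + 1) ^ 2) ^ s := Real.mul_rpow (by norm_num) (by positivity)
      _ = 2 ^ s * ((k : ℝ) + 1) ^ (2 * s) := by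
          rw [show (2 : ℝ) * s = ((2 : ℕ) : ℝ) * s by norm_num, Real.rpow_mul hu,
            Real.rpow_natCast]
  -- summability
  have hsum_rpow : Summable (fun k : ℕ => ((k : ℝ) + 1) ^ (2 * s) * x ^ k) :=
    summable_rpow_aux (2 * s) hx0.le hx1
  have hsum_w : Summable (fun k : ℕ => (1 + ((k : ℝ) + 1) ^ 2) ^ s * x ^ k) := by
    refine Summable.of_nonneg_of_le (fun k => by positivity) (fun k => ?_)
      (hsum_rpow.mul_left ((2 : ℝ) ^ s))
    calc (1 + ((k : ℝ) + 1) ^ 2) ^ s * x ^ k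
        ≤ (2 ^ s * ((k : ℝ) + 1) ^ (2 * s)) * x ^ k :=
          mul_le_mul_of_nonneg_right (hw2 k) (by positivity)
      _ = 2 ^ s * (((k : ℝ) + 1) ^ (2 * s) * x ^ k) := by ring
  -- lower bound
  have hlow : ((⌈2 * s⌉₊.factorial : ℝ) / (⌈2 * s⌉₊ : ℝ) ^ (⌈2 * s⌉₊ : ℕ)) ^ 2
      / ((⌊2 * (⌈2 * s⌉₊ : ℝ) - 2 * s⌋₊ + 1).factorial : ℝ) / (1 - x) ^ (2 * s + 1)
      ≤ ∑' k : ℕ, (1 + ((k : ℝ) + 1) ^ 2) ^ s * x ^ k := by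
    refine le_trans (le_tsum_rpow (2 * s) h2s hx0 hx1) ?_
    exact Summable.tsum_le_tsum (fun k => mul_le_mul_of_nonneg_right (hw1 k) (by positivity))
      hsum_rpow hsum_w
  -- upper bound
  have hup : ∑' k : ℕ, (1 + ((k : ℝ) + 1) ^ 2) ^ s * x ^ k
      ≤ 2 ^ s * (((⌊2 * s⌋₊ + 1).factorial : ℝ) / (1 - x) ^ (2 * s + 1)) := by
    calc ∑' k : ℕ, (1 + ((k : ℝ) + 1) ^ 2) ^ s * x ^ k
        ≤ ∑' k : ℕ, 2 ^ s * (((k : ℝ) + 1) ^ (2 * s) * x ^ k) := by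
          refine Summable.tsum_le_tsum (fun k => ?_) hsum_w (hsum_rpow.mul_left _)
          calc (1 + ((k : ℝ) + 1) ^ 2) ^ s * x ^ k
              ≤ (2 ^ s * ((k : ℝ) + 1) ^ (2 * s)) * x ^ k :=
                mul_le_mul_of_nonneg_right (hw2 k) (by positivity)
            _ = 2 ^ s * (((k : ℝ) + 1) ^ (2 * s) * x ^ k) := by ring
      _ = 2 ^ s * ∑' k : ℕ, ((k : ℝ) + 1) ^ (2 * s) * x ^ k := tsum_mul_left
      _ ≤ 2 ^ s * (((⌊2 * s⌋₊ + 1).factorial : ℝ) / (1 - x) ^ (2 * s + 1)) := by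
          apply mul_le_mul_of_nonneg_left (tsum_rpow_le (2 * s) h2s.le hx0 hx1)
            (Real.rpow_nonneg (by norm_num) s)
  rw [htsum]
  constructor
  · rw [show (((⌈2 * s⌉₊.factorial : ℝ) / (⌈2 * s⌉₊ : ℝ) ^ (⌈2 * s⌉₊ : ℕ)) ^ 2
        / ((⌊2 * (⌈2 * s⌉₊ : ℝ) - 2 * s⌋₊ + 1).factorial : ℝ))
        * (‖c‖ ^ 2 / (1 - x) ^ (2 * s + 1))
      = ‖c‖ ^ 2 * (((⌈2 * s⌉₊.factorial : ℝ) / (⌈2 * s⌉₊ : ℝ) ^ (⌈2 * s⌉₊ : ℕ)) ^ 2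
        / ((⌊2 * (⌈2 * s⌉₊ : ℝ) - 2 * s⌋₊ + 1).factorial : ℝ) / (1 - x) ^ (2 * s + 1)) by ring]
    exact mul_le_mul_of_nonneg_left hlow hc2
  · rw [show ((2 : ℝ) ^ s * ((⌊2 * s⌋₊ + 1).factorial : ℝ))
        * (‖c‖ ^ 2 / (1 - x) ^ (2 * s + 1))
      = ‖c‖ ^ 2 * (2 ^ s * (((⌊2 * s⌋₊ + 1).factorial : ℝ) / (1 - x) ^ (2 * s + 1))) by ring]
    exact mul_le_mul_of_nonneg_left hup hc2
end
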